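/- arXiv:1901.04774 — 7 statements merged into one kernel-verified Lean document; each statement's English description precedes it below -/
import Mathlib

section
/- Let w = w(x_1,...,x_n) be a multilinear commutator word, G a group, and N a normal subgroup of G. Then the w*-residual of N in G equals the subgroup generated by all w-values w(g_1,...,g_n) with g_1,...,g_n ∈ G such that at least one of g_1,...,g_n belongs to N. -/
/-- Multilinear commutator words: the word `x` in one variable is a multilinear commutator
word, and if `u` and `v` are multilinear commutator words (on disjoint sets of variables,
here enforced by using `m + n` fresh variables), then `[u,v]` is one. -/
inductive MultilinearCommutatorWord : ℕ → Type
  | var : MultilinearCommutatorWord 1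
  | comm : ∀ {m n : ℕ}, MultilinearCommutatorWord m → MultilinearCommutatorWord n →
      MultilinearCommutatorWord (m + n)

namespace MultilinearCommutatorWord

open scoped commutatorElement

/-- Evaluation of a multilinear commutator word on a tuple of group elements. -/
def eval {G : Type*} [Group G] : ∀ {n : ℕ}, MultilinearCommutatorWord n → (Fin n → G) → G
  | _, var, f => f 0
  | _, comm u v, f =>
      ⁅eval u (fun i => f (Fin.castAdd _ i)), eval v (fun j => f (Fin.natAdd _ j))⁆

end MultilinearCommutatorWord

open scoped commutatorElement

/-- The marginal subgroup `w*(G)` of a group `G` corresponding to the word `w`, as a set: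
all `x` such that inserting `x` on either side of any entry does not change the value of `w`. -/
def marginal {G : Type*} [Group G] {n : ℕ} (w : MultilinearCommutatorWord n) : Set G :=
  {x : G | ∀ (g : Fin n → G) (i : Fin n),
    w.eval (Function.update g i (x * g i)) = w.eval g ∧
    w.eval (Function.update g i (g i * x)) = w.eval g}

/-- The `w*`-residual of a subset `S` of `G`: the intersection of all normal subgroups `N`
of `G` such that the image of `S` in `G ⧸ N` is contained in the marginal subgroup
`w*(G ⧸ N)`. -/
def wStarResidual {G : Type*} [Group G] {n : ℕ} (w : MultilinearCommutatorWord n)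
    (S : Set G) : Subgroup G :=
  sInf {N : Subgroup G | ∃ hN : N.Normal,
    letI := hN
    ∀ s ∈ S, (QuotientGroup.mk s : G ⧸ N) ∈ marginal w}

namespace MultilinearCommutatorWord

lemma eval_map {G H : Type*} [Group G] [Group H] (φ : G →* H) :
    ∀ {n : ℕ} (w : MultilinearCommutatorWord n) (f : Fin n → G),
      w.eval (φ ∘ f) = φ (w.eval f)
  | _, var, f => rfl
  | _, comm u v, f => by
    show ⁅eval u (φ ∘ fun i => f (Fin.castAdd _ i)), eval v (φ ∘ fun j => f (Fin.natAdd _ j))⁆ = _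
    rw [eval_map φ u, eval_map φ v, eval, map_commutatorElement]

lemma eval_eq_one {G : Type*} [Group G] :
    ∀ {n : ℕ} (w : MultilinearCommutatorWord n) (f : Fin n → G) (i : Fin n),
      f i = 1 → w.eval f = 1
  | _, var, f, i, h => by
    rw [eval, Subsingleton.elim (0 : Fin 1) i, h]
  | _, comm u v, f, i, h => by
    induction i using Fin.addCases with
    | left j =>
      rw [eval, eval_eq_one u _ j h, commutatorElement_def]
      group
    | right j =>
      rw [eval, eval_eq_one v (fun k => f (Fin.natAdd _ k)) j h, commutatorElement_def]
      group

end MultilinearCommutatorWord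
open MultilinearCommutatorWord Function

section
variable {G : Type*} [Group G] (N : Subgroup G)

/-- The set of w-values with at least one entry in N. -/
def mcwVals {n : ℕ} (w : MultilinearCommutatorWord n) : Set G :=
  {g : G | ∃ f : Fin n → G, (∃ i, f i ∈ N) ∧ w.eval f = g}

lemma mcwVals_conj (hN : N.Normal) {n : ℕ} (w : MultilinearCommutatorWord n) (z : G) :
    (MulAut.conj z) '' mcwVals N w ⊆ mcwVals N w := by
  rintro _ ⟨x, ⟨f, ⟨i, hi⟩, rfl⟩, rfl⟩
  refine ⟨(MulAut.conj z) ∘ f, ⟨i, ?_⟩, ?_⟩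
  · exact hN.conj_mem _ hi z
  · exact eval_map (MulAut.conj z).toMonoidHom w f

lemma mcwK_normal (hN : N.Normal) {n : ℕ} (w : MultilinearCommutatorWord n) :
    (Subgroup.closure (mcwVals N w)).Normal := by
  constructor
  intro x hx z
  have h := (MonoidHom.map_closure (MulAut.conj z).toMonoidHom (mcwVals N w)).le.trans
    (Subgroup.closure_mono (mcwVals_conj N hN w z))
  exact h ⟨x, hx, rfl⟩

end

section
variable {G : Type*} [Group G]

lemma commutator_closure_left {Kw : Subgroup G} (hKw : Kw.Normal) (S : Set G) (b : G)
    (hgen : ∀ x ∈ S, ⁅x, b⁆ ∈ Kw) {c : G} (hc : c ∈ Subgroup.closure S) : ⁅c, b⁆ ∈ Kw := by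
  let Hb : Subgroup G :=
    { carrier := {x | ⁅x, b⁆ ∈ Kw}
      one_mem' := by
        have : ⁅(1 : G), b⁆ = 1 := by group
        simp only [Set.mem_setOf_eq, this]; exact one_mem Kw
      mul_mem' := by
        intro x y hx hy
        have h : ⁅x * y, b⁆ = (x * ⁅y, b⁆ * x⁻¹) * ⁅x, b⁆ := by group
        simp only [Set.mem_setOf_eq] at *
        rw [h]
        exact mul_mem (hKw.conj_mem _ hy x) hx
      inv_mem' := by
        intro x hx
        have h : ⁅x⁻¹, b⁆ = x⁻¹ * ⁅x, b⁆⁻¹ * (x⁻¹)⁻¹ := by group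
        simp only [Set.mem_setOf_eq] at *
        rw [h]
        exact hKw.conj_mem _ (inv_mem hx) x⁻¹ }
  have : Subgroup.closure S ≤ Hb := (Subgroup.closure_le Hb).2 hgen
  exact this hc

lemma commutator_closure_right {Kw : Subgroup G} (hKw : Kw.Normal) (S : Set G) (a : G)
    (hgen : ∀ x ∈ S, ⁅a, x⁆ ∈ Kw) {c : G} (hc : c ∈ Subgroup.closure S) : ⁅a, c⁆ ∈ Kw := by
  let Ha : Subgroup G :=
    { carrier := {x | ⁅a, x⁆ ∈ Kw}
      one_mem' := by
        have : ⁅a, (1 : G)⁆ = 1 := by group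
        simp only [Set.mem_setOf_eq, this]; exact one_mem Kw
      mul_mem' := by
        intro x y hx hy
        have h : ⁅a, x * y⁆ = ⁅a, x⁆ * (x * ⁅a, y⁆ * x⁻¹) := by group
        simp only [Set.mem_setOf_eq] at *
        rw [h]
        exact mul_mem hx (hKw.conj_mem _ hy x)
      inv_mem' := by
        intro x hx
        have h : ⁅a, x⁻¹⁆ = x⁻¹ * ⁅a, x⁆⁻¹ * (x⁻¹)⁻¹ := by group
        simp only [Set.mem_setOf_eq] at *
        rw [h]
        exact hKw.conj_mem _ (inv_mem hx) x⁻¹ }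
  have : Subgroup.closure S ≤ Ha := (Subgroup.closure_le Ha).2 hgen
  exact this hc

end

namespace MultilinearCommutatorWord

lemma eval_addCases {G : Type*} [Group G] {m n : ℕ} (u : MultilinearCommutatorWord m)
    (v : MultilinearCommutatorWord n) (fu : Fin m → G) (fv : Fin n → G) :
    (comm u v).eval (Fin.addCases fu fv) = ⁅u.eval fu, v.eval fv⁆ := by
  rw [eval]
  simp only [Fin.addCases_left, Fin.addCases_right]

end MultilinearCommutatorWord

section
variable {α : Type*}

lemma update_comp_castAdd {m n : ℕ} (g : Fin (m + n) → α) (j : Fin m) (x : α) :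
    (fun k : Fin m => Function.update g (Fin.castAdd n j) x (Fin.castAdd n k)) =
      Function.update (fun k => g (Fin.castAdd n k)) j x := by
  funext k
  rcases eq_or_ne k j with rfl | hk
  · simp
  · rw [Function.update_of_ne (fun h => hk (Fin.castAdd_injective m n h)),
      Function.update_of_ne hk]

lemma update_comp_natAdd_of_castAdd {m n : ℕ} (g : Fin (m + n) → α) (j : Fin m) (x : α) :
    (fun k : Fin n => Function.update g (Fin.castAdd n j) x (Fin.natAdd m k)) =
      fun k => g (Fin.natAdd m k) := by
  funext k
  rw [Function.update_of_ne]
  apply Fin.ne_of_val_ne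
  simp only [Fin.coe_natAdd, Fin.coe_castAdd]
  omega

lemma update_comp_natAdd {m n : ℕ} (g : Fin (m + n) → α) (j : Fin n) (x : α) :
    (fun k : Fin n => Function.update g (Fin.natAdd m j) x (Fin.natAdd m k)) =
      Function.update (fun k => g (Fin.natAdd m k)) j x := by
  funext k
  rcases eq_or_ne k j with rfl | hk
  · simp
  · rw [Function.update_of_ne (fun h => hk (by
        have := congrArg Fin.val h
        simp only [Fin.coe_natAdd] at this
        exact Fin.ext (by omega))),
      Function.update_of_ne hk]

lemma update_comp_castAdd_of_natAdd {m n : ℕ} (g : Fin (m + n) → α) (j : Fin n) (x : α) :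
    (fun k : Fin m => Function.update g (Fin.natAdd m j) x (Fin.castAdd n k)) =
      fun k => g (Fin.castAdd n k) := by
  funext k
  rw [Function.update_of_ne]
  apply Fin.ne_of_val_ne
  simp only [Fin.coe_natAdd, Fin.coe_castAdd]
  omega

end

open MultilinearCommutatorWord in
lemma mcw_key {G : Type*} [Group G] (N : Subgroup G) (hN : N.Normal) :
    ∀ {n : ℕ} (w : MultilinearCommutatorWord n) (g : Fin n → G) (i : Fin n) (s : G),
      s ∈ N → (w.eval g)⁻¹ * w.eval (Function.update g i (g i * s)) ∈
        Subgroup.closure (mcwVals N w)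
  | _, var, g, i, s, hs => by
    have hi : i = 0 := Subsingleton.elim i 0
    subst hi
    have h1 : eval var (Function.update g 0 (g 0 * s)) = g 0 * s := by
      show Function.update g 0 (g 0 * s) 0 = g 0 * s
      rw [Function.update_self]
    have h2 : eval var g = g 0 := rfl
    rw [h1, h2, inv_mul_cancel_left]
    exact Subgroup.subset_closure ⟨fun _ => s, ⟨0, hs⟩, rfl⟩
  | _, MultilinearCommutatorWord.comm u v, g, i, s, hs => by
    have hKw : (Subgroup.closure (mcwVals N (comm u v))).Normal := mcwK_normal N hN _
    induction i using Fin.addCases with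
    | left j =>
      set gu : Fin _ → G := fun k => g (Fin.castAdd _ k) with hgu
      set gv : Fin _ → G := fun k => g (Fin.natAdd _ k) with hgv
      have e1 : eval (comm u v) g = ⁅u.eval gu, v.eval gv⁆ := rfl
      have e2 : eval (comm u v) (Function.update g (Fin.castAdd _ j) (g (Fin.castAdd _ j) * s)) =
          ⁅u.eval (Function.update gu j (gu j * s)), v.eval gv⁆ := by
        rw [MultilinearCommutatorWord.eval, update_comp_castAdd, update_comp_natAdd_of_castAdd]
      set a := u.eval gu
      set b := v.eval gv
      set c := a⁻¹ * u.eval (Function.update gu j (gu j * s)) with hc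
      have hcmem : c ∈ Subgroup.closure (mcwVals N u) := mcw_key N hN u gu j s hs
      have hcb : ⁅c, b⁆ ∈ Subgroup.closure (mcwVals N (comm u v)) := by
        refine commutator_closure_left hKw _ _ ?_ hcmem
        rintro x ⟨fu, ⟨j0, hj0⟩, rfl⟩
        refine Subgroup.subset_closure ⟨Fin.addCases fu gv, ⟨Fin.castAdd _ j0, ?_⟩, ?_⟩
        · simpa using hj0
        · exact eval_addCases u v fu gv
      have hrw : (⁅a, b⁆)⁻¹ * ⁅a * c, b⁆ = ⁅a, b⁆⁻¹ * ((a * ⁅c, b⁆ * a⁻¹) * ⁅a, b⁆) := by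
        group
      have hac : u.eval (Function.update gu j (gu j * s)) = a * c := by
        rw [hc, mul_inv_cancel_left]
      rw [e1, e2, hac, hrw]
      have m1 := hKw.conj_mem _ hcb a
      have m2 := hKw.conj_mem _ m1 (⁅a, b⁆)⁻¹
      rw [inv_inv] at m2
      simpa [mul_assoc] using m2
    | right j =>
      set gu : Fin _ → G := fun k => g (Fin.castAdd _ k) with hgu
      set gv : Fin _ → G := fun k => g (Fin.natAdd _ k) with hgv
      have e1 : eval (comm u v) g = ⁅u.eval gu, v.eval gv⁆ := rfl
      have e2 : eval (comm u v) (Function.update g (Fin.natAdd _ j) (g (Fin.natAdd _ j) * s)) =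
          ⁅u.eval gu, v.eval (Function.update gv j (gv j * s))⁆ := by
        rw [MultilinearCommutatorWord.eval, update_comp_natAdd, update_comp_castAdd_of_natAdd]
      set a := u.eval gu
      set b := v.eval gv
      set c := b⁻¹ * v.eval (Function.update gv j (gv j * s)) with hc
      have hcmem : c ∈ Subgroup.closure (mcwVals N v) := mcw_key N hN v gv j s hs
      have hac : ⁅a, c⁆ ∈ Subgroup.closure (mcwVals N (comm u v)) := by
        refine commutator_closure_right hKw _ _ ?_ hcmem
        rintro x ⟨fv, ⟨j0, hj0⟩, rfl⟩
        refine Subgroup.subset_closure ⟨Fin.addCases gu fv, ⟨Fin.natAdd _ j0, ?_⟩, ?_⟩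
        · simpa using hj0
        · exact eval_addCases u v gu fv
      have hrw : (⁅a, b⁆)⁻¹ * ⁅a, b * c⁆ = b * ⁅a, c⁆ * b⁻¹ := by
        group
      have hbc : v.eval (Function.update gv j (gv j * s)) = b * c := by
        rw [hc, mul_inv_cancel_left]
      rw [e1, e2, hbc, hrw]
      exact hKw.conj_mem _ hac b

open MultilinearCommutatorWord in
/-- If `w` is a multilinear commutator word on `n` variables, `G` a group and `N` a normal
subgroup of `G`, then the `w*`-residual of `N` in `G` is the subgroup generated by all
`w`-values `w(g 0, ..., g (n-1))` in which at least one entry lies in `N`. -/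
theorem wStarResidual_eq_closure_values_with_entry_in {G : Type*} [Group G]
    {n : ℕ} (w : MultilinearCommutatorWord n) (N : Subgroup G) (hN : N.Normal) :
    wStarResidual w (N : Set G) =
      Subgroup.closure {g : G | ∃ f : Fin n → G, (∃ i, f i ∈ N) ∧ w.eval f = g} := by
  have hset : {g : G | ∃ f : Fin n → G, (∃ i, f i ∈ N) ∧ w.eval f = g} = mcwVals N w := rfl
  rw [hset]
  have hKnorm : (Subgroup.closure (mcwVals N w)).Normal := mcwK_normal N hN w
  set K := Subgroup.closure (mcwVals N w) with hK
  apply le_antisymm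
  · apply sInf_le
    refine ⟨hKnorm, ?_⟩
    intro s hs gbar i
    letI := hKnorm
    obtain ⟨g, rfl⟩ : ∃ g : Fin n → G, (QuotientGroup.mk' K) ∘ g = gbar :=
      ⟨fun j => (gbar j).out, funext fun j => QuotientGroup.out_eq' (gbar j)⟩
    have hupdate : ∀ x : G,
        Function.update ((QuotientGroup.mk' K) ∘ g) i ((QuotientGroup.mk' K) x) =
          (QuotientGroup.mk' K) ∘ (Function.update g i x) :=
      fun x => (Function.comp_update _ g i x).symm
    have hmain : ∀ x : G, x ∈ N →
        w.eval ((QuotientGroup.mk' K) ∘ Function.update g i (g i * x)) =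
          w.eval ((QuotientGroup.mk' K) ∘ g) := by
      intro x hx
      rw [eval_map, eval_map]
      have := mcw_key N hN w g i x hx
      simp only [QuotientGroup.mk'_apply]
      exact (QuotientGroup.eq.mpr this).symm
    constructor
    · have h1 : (QuotientGroup.mk s : G ⧸ K) * ((QuotientGroup.mk' K) ∘ g) i =
          (QuotientGroup.mk' K) (s * g i) := by
        simp [QuotientGroup.mk'_apply]
      rw [h1, hupdate]
      have h2 : s * g i = g i * ((g i)⁻¹ * s * g i) := by group
      rw [h2]
      refine hmain _ ?_
      simpa using hN.conj_mem s hs (g i)⁻¹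
    · have h1 : ((QuotientGroup.mk' K) ∘ g) i * (QuotientGroup.mk s : G ⧸ K) =
          (QuotientGroup.mk' K) (g i * s) := by
        simp [QuotientGroup.mk'_apply]
      rw [h1, hupdate]
      exact hmain s hs
  · refine le_sInf ?_
    rintro M ⟨hMnorm, hmarg⟩
    letI := hMnorm
    rw [Subgroup.closure_le]
    rintro x ⟨f, ⟨i, hfi⟩, rfl⟩
    have hm := hmarg (f i) hfi (Function.update ((QuotientGroup.mk' M) ∘ f) i 1) i
    obtain ⟨hleft, -⟩ := hm
    have h2 : Function.update (Function.update ((QuotientGroup.mk' M) ∘ f) i 1) i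
          ((QuotientGroup.mk (f i) : G ⧸ M) *
            (Function.update ((QuotientGroup.mk' M) ∘ f) i 1 i)) =
        (QuotientGroup.mk' M) ∘ f := by
      rw [Function.update_self, Function.update_idem, mul_one]
      exact Function.update_eq_self i _
    rw [h2] at hleft
    have h3 : w.eval ((QuotientGroup.mk' M) ∘ f) = QuotientGroup.mk (w.eval f) := by
      rw [eval_map]; rfl
    have h4 : w.eval (Function.update ((QuotientGroup.mk' M) ∘ f) i 1) = 1 :=
      eval_eq_one w _ i (Function.update_self i 1 _)
    rw [h3, h4] at hleft
    exact (QuotientGroup.eq_one_iff (w.eval f)).mp hleft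
end

section
/- Let w = w(x_1,...,x_n) be a multilinear commutator word, G a group, T a normal subgroup of G, and a_1,...,a_n elements of G such that every element of X_w(a_1T,...,a_nT) has at most m conjugates in G. Then every w-value w(t_1,...,t_n) with t_1,...,t_n ∈ T has at most m^{2^n} conjugates in G. -/
open scoped commutatorElement

namespace MCWAux

open MultilinearCommutatorWord

variable {G : Type*} [Group G]

def cnj (c x : G) : G := c⁻¹ * x * c

lemma cnj_cnj (c d x : G) : cnj c (cnj d x) = cnj (d * c) x := by simp only [cnj]; group
lemma cnj_mul (c x y : G) : cnj c (x * y) = cnj c x * cnj c y := by simp only [cnj]; group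
lemma cnj_inv (c x : G) : cnj c x⁻¹ = (cnj c x)⁻¹ := by simp only [cnj]; group
lemma cnj_one (x : G) : cnj 1 x = x := by simp only [cnj]; group
lemma cnj_one_right (c : G) : cnj c 1 = 1 := by simp only [cnj]; group
lemma cnj_self (x : G) : cnj x x = x := by simp only [cnj]; group
lemma cnj_K (c x y : G) : cnj c ⁅x, y⁆ = ⁅cnj c x, cnj c y⁆ := by
  simp only [cnj, commutatorElement_def]; group
lemma map_cnj {H : Type*} [Group H] (φ : G →* H) (c x : G) :
    φ (cnj c x) = cnj (φ c) (φ x) := by simp [cnj]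

lemma K_one_left (y : G) : ⁅(1 : G), y⁆ = 1 := by group
lemma K_one_right (x : G) : ⁅x, (1 : G)⁆ = 1 := by group

lemma eval_map {H : Type*} [Group H] (φ : G →* H) :
    ∀ {n} (w : MultilinearCommutatorWord n) (f : Fin n → G),
      φ (w.eval f) = w.eval (fun i => φ (f i))
  | _, .var, f => rfl
  | _, .comm u v, f => by
      show φ ⁅_, _⁆ = ⁅_, _⁆
      rw [map_commutatorElement, eval_map φ u, eval_map φ v]

lemma eval_cnj : ∀ {n} (w : MultilinearCommutatorWord n) (c : G) (f : Fin n → G),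
    cnj c (w.eval f) = w.eval (fun i => cnj c (f i))
  | _, .var, _, _ => rfl
  | _, .comm u v, c, f => by
      show cnj c ⁅_, _⁆ = ⁅_, _⁆
      rw [cnj_K, eval_cnj u, eval_cnj v]

def gpin {H : Type*} [Group H] : ∀ {n}, MultilinearCommutatorWord n → (Fin n → H) → H
  | _, .var, _ => 1
  | _, .comm u v, f =>
      gpin u (fun i => f (Fin.castAdd _ i)) * (eval v (fun j => f (Fin.natAdd _ j)))⁻¹

lemma gpin_cnj : ∀ {n} (w : MultilinearCommutatorWord n) (c : G) (f : Fin n → G),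
    gpin w (fun i => cnj c (f i)) = cnj c (gpin w f)
  | _, .var, c, _ => (cnj_one_right c).symm
  | _, .comm u v, c, f => by
      show gpin u _ * (eval v _)⁻¹ = cnj c (gpin u _ * (eval v _)⁻¹)
      rw [gpin_cnj u c, ← eval_cnj v c, cnj_mul, cnj_inv]

def prodP (L : List (G × G)) : G := (L.map fun p => p.1 * p.2).prod

lemma prodP_nil : prodP ([] : List (G × G)) = 1 := rfl
lemma prodP_cons (p : G × G) (L : List (G × G)) :
    prodP (p :: L) = p.1 * p.2 * prodP L := by simp [prodP]
lemma prodP_append (L₁ L₂ : List (G × G)) :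
    prodP (L₁ ++ L₂) = prodP L₁ * prodP L₂ := by simp [prodP]

def invP (L : List (G × G)) : List (G × G) := L.reverse.map fun p => (p.2⁻¹, p.1⁻¹)

lemma invP_length (L : List (G × G)) : (invP L).length = L.length := by simp [invP]

lemma prodP_invP (L : List (G × G)) : prodP (invP L) = (prodP L)⁻¹ := by
  induction L with
  | nil => simp [invP, prodP]
  | cons p L ih =>
      rw [prodP_cons]
      have h : invP (p :: L) = invP L ++ [(p.2⁻¹, p.1⁻¹)] := by simp [invP]
      rw [h, prodP_append, ih]
      simp [prodP]

lemma mem_invP {L : List (G × G)} {q : G × G} (hq : q ∈ invP L) :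
    ∃ p ∈ L, q = (p.2⁻¹, p.1⁻¹) := by
  simp only [invP, List.mem_map, List.mem_reverse] at hq
  obtain ⟨p, hp, rfl⟩ := hq
  exact ⟨p, hp, rfl⟩

/- bulk group identities used in the decomposition -/

lemma id_step_split (X Z₁ Z₂ R S : G) :
    cnj S ⁅X, Z₁ * Z₂ * R⁆ =
      cnj S ⁅X, Z₁⁆ * cnj (Z₁⁻¹ * S) ⁅X, Z₂⁆ * cnj ((Z₁ * Z₂)⁻¹ * S) ⁅X, R⁆ := by
  simp only [cnj, commutatorElement_def]; group

lemma id_atom1 (θ Pt ρ R S : G) :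
    cnj S ⁅Pt, cnj ρ R⁻¹⁆ =
      cnj (θ * (R * ρ * S)) (⁅cnj θ⁻¹ (cnj ρ⁻¹ Pt), cnj θ⁻¹ R⁆)⁻¹ := by
  simp only [cnj, commutatorElement_def]; group

lemma id_atom2 (θ Pt ρ R c : G) :
    cnj c ⁅Pt, cnj ρ R⁆ = cnj (θ * (ρ * c)) ⁅cnj θ⁻¹ (cnj ρ⁻¹ Pt), cnj θ⁻¹ R⁆ := by
  simp only [cnj, commutatorElement_def]; group

lemma id_dblock_init (h γv P W : G) :
    cnj h ⁅P, cnj γv⁻¹ W⁆ = cnj (γv⁻¹ * h) ⁅cnj γv P, W⁆ := by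
  simp only [cnj, commutatorElement_def]; group

lemma id_ustep (x F V S : G) :
    cnj S ⁅x * F, V⁆ = cnj S ⁅x, cnj F⁻¹ V⁆ * cnj S ⁅F, V⁆ := by
  simp only [cnj, commutatorElement_def]; group

lemma id_upos (τ P V S : G) :
    cnj S ⁅cnj τ P, V⁆ = cnj (τ * S) ⁅P, cnj τ⁻¹ V⁆ := by
  simp only [cnj, commutatorElement_def]; group

lemma id_uneg (τ P V S : G) :
    cnj S ⁅cnj τ P⁻¹, V⁆ = (cnj (τ * S) ⁅P, cnj P (cnj τ⁻¹ V)⁆)⁻¹ := by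
  simp only [cnj, commutatorElement_def]; group

lemma id_assemble (γu Γ U V : G) :
    cnj (γu * Γ) ⁅U, V⁆ = cnj Γ ⁅cnj γu U, cnj γu V⁆ := by
  simp only [cnj, commutatorElement_def]; group


section Quot

variable (T : Subgroup G) [T.Normal]

/-- quotient map -/
abbrev qm : G →* G ⧸ T := QuotientGroup.mk' T

lemma qm_eq_of_mem {x y : G} (h : x⁻¹ * y ∈ T) : qm T x = qm T y :=
  (QuotientGroup.eq).mpr h

lemma mem_of_qm_eq {x y : G} (h : qm T x = qm T y) : x⁻¹ * y ∈ T :=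
  (QuotientGroup.eq).mp h

lemma qm_eq_one {x : G} (h : x ∈ T) : qm T x = 1 :=
  (QuotientGroup.eq_one_iff x).mpr h

lemma mem_of_qm_one {x : G} (h : qm T x = 1) : x ∈ T :=
  (QuotientGroup.eq_one_iff x).mp h

/-- `Q` is a `w`-value on the coset system `a · T`. -/
def Good {n : ℕ} (w : MultilinearCommutatorWord n) (a : Fin n → G) (Q : G) : Prop :=
  ∃ c : Fin n → G, (∀ j, (a j)⁻¹ * c j ∈ T) ∧ Q = w.eval c

lemma good_pi {n : ℕ} {w : MultilinearCommutatorWord n} {a : Fin n → G} {Q : G}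
    (hQ : Good T w a Q) : qm T Q = w.eval (fun j => qm T (a j)) := by
  obtain ⟨c, hc, rfl⟩ := hQ
  rw [eval_map]
  congr 1
  funext j
  exact (qm_eq_of_mem T (hc j)).symm

lemma good_cnj_triv {n : ℕ} {w : MultilinearCommutatorWord n} {a : Fin n → G} {Q : G}
    (hQ : Good T w a Q) {e : G} (he : qm T e = 1) : Good T w a (cnj e Q) := by
  obtain ⟨c, hc, rfl⟩ := hQ
  refine ⟨fun j => cnj e (c j), fun j => ?_, (eval_cnj w e c)⟩
  refine mem_of_qm_eq T ?_
  rw [map_cnj, he, cnj_one]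
  exact qm_eq_of_mem T (hc j)

lemma good_cnj_back {n : ℕ} {w : MultilinearCommutatorWord n} {a : Fin n → G} {θ R : G}
    (hR : Good T w (fun j => cnj θ (a j)) R) : Good T w a (cnj θ⁻¹ R) := by
  obtain ⟨c, hc, rfl⟩ := hR
  refine ⟨fun j => cnj θ⁻¹ (c j), fun j => ?_, (eval_cnj w θ⁻¹ c)⟩
  refine mem_of_qm_eq T ?_
  have h1 : qm T (cnj θ (a j)) = qm T (c j) := qm_eq_of_mem T (hc j)
  rw [map_cnj] at h1
  rw [map_cnj, ← h1, cnj_cnj]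
  simp [cnj]

lemma good_comm {p q : ℕ} {u : MultilinearCommutatorWord p} {v : MultilinearCommutatorWord q}
    {a : Fin (p + q) → G} {X Y : G}
    (hX : Good T u (fun i => a (Fin.castAdd q i)) X)
    (hY : Good T v (fun j => a (Fin.natAdd p j)) Y) :
    Good T (u.comm v) a ⁅X, Y⁆ := by
  obtain ⟨c', hc', rfl⟩ := hX
  obtain ⟨c'', hc'', rfl⟩ := hY
  refine ⟨Fin.addCases c' c'', fun j => ?_, ?_⟩
  · refine Fin.addCases (fun i => ?_) (fun i => ?_) j
    · simpa using hc' i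
    · simpa using hc'' i
  · show ⁅_, _⁆ = ⁅eval u _, eval v _⁆
    congr 1
    · congr 1; funext i; simp
    · congr 1; funext i; simp

/-- a valid pair in the decomposition: `(τ₁⁻¹ Q₁⁻¹ τ₁, τ₂⁻¹ Q₂ τ₂)` with `τᵢ ∈ T`,
`Qᵢ` being `w`-values on the cosets `a · T`. -/
def NPair {n : ℕ} (w : MultilinearCommutatorWord n) (a : Fin n → G) (pr : G × G) : Prop :=
  ∃ τ₁ τ₂ Q₁ Q₂ : G, τ₁ ∈ T ∧ τ₂ ∈ T ∧ Good T w a Q₁ ∧ Good T w a Q₂ ∧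
    pr.1 = cnj τ₁ Q₁⁻¹ ∧ pr.2 = cnj τ₂ Q₂

lemma npair_pi_fst {n : ℕ} {w : MultilinearCommutatorWord n} {a : Fin n → G} {pr : G × G}
    (h : NPair T w a pr) : qm T pr.1 = (w.eval (fun j => qm T (a j)))⁻¹ := by
  obtain ⟨τ₁, τ₂, Q₁, Q₂, ht₁, ht₂, hQ₁, hQ₂, h1, h2⟩ := h
  rw [h1, map_cnj, qm_eq_one T ht₁, cnj_one, map_inv, good_pi T hQ₁]

lemma npair_pi_snd {n : ℕ} {w : MultilinearCommutatorWord n} {a : Fin n → G} {pr : G × G}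
    (h : NPair T w a pr) : qm T pr.2 = w.eval (fun j => qm T (a j)) := by
  obtain ⟨τ₁, τ₂, Q₁, Q₂, ht₁, ht₂, hQ₁, hQ₂, h1, h2⟩ := h
  rw [h2, map_cnj, qm_eq_one T ht₂, cnj_one, good_pi T hQ₂]

lemma npair_pi_mul {n : ℕ} {w : MultilinearCommutatorWord n} {a : Fin n → G} {pr : G × G}
    (h : NPair T w a pr) : qm T (pr.1 * pr.2) = 1 := by
  rw [map_mul, npair_pi_fst T h, npair_pi_snd T h, inv_mul_cancel]

lemma npair_inv {n : ℕ} {w : MultilinearCommutatorWord n} {a : Fin n → G} {pr : G × G}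
    (h : NPair T w a pr) : NPair T w a (pr.2⁻¹, pr.1⁻¹) := by
  obtain ⟨τ₁, τ₂, Q₁, Q₂, ht₁, ht₂, hQ₁, hQ₂, h1, h2⟩ := h
  exact ⟨τ₂, τ₁, Q₂, Q₁, ht₂, ht₁, hQ₂, hQ₁, by rw [h2, cnj_inv], by rw [h1, cnj_inv, inv_inv]⟩

lemma cnj_mem (hN : T.Normal) (c : G) {x : G} (hx : x ∈ T) : cnj c x ∈ T := by
  have := hN.conj_mem x hx c⁻¹
  simpa [cnj, mul_assoc] using this

/-- The decomposition statement for a word `w`. -/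
def DecProp {n : ℕ} (w : MultilinearCommutatorWord n) : Prop :=
  ∀ (a t : Fin n → G), (∀ i, t i ∈ T) →
    ∃ (γ : G) (L : List (G × G)),
      qm T γ = gpin w (fun i => qm T (a i)) ∧
      cnj γ (w.eval t) = prodP L ∧
      2 * L.length = 2 ^ n ∧
      ∀ pr ∈ L, NPair T w a pr


lemma dblock {p q : ℕ} (u : MultilinearCommutatorWord p) (v : MultilinearCommutatorWord q)
    (a : Fin (p + q) → G) (ihv : DecProp T v)
    {P : G} (hP : Good T u (fun i => a (Fin.castAdd q i)) P)
    {g : Fin q → G} (hg : ∀ i, g i ∈ T)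
    {h : G} (hh : qm T h = (v.eval (fun j => qm T (a (Fin.natAdd p j))))⁻¹) :
    ∃ L : List (G × G), cnj h ⁅P, v.eval g⁆ = prodP L ∧ 2 * L.length = 2 ^ q ∧
      ∀ pr ∈ L, NPair T (u.comm v) a pr := by
  obtain ⟨θ, hθ⟩ := QuotientGroup.mk'_surjective T
    (gpin v (fun j => qm T (a (Fin.natAdd p j))))
  obtain ⟨γv, Lv, hγv, heqv, hlenv, hLv⟩ :=
    ihv (fun j => cnj θ (a (Fin.natAdd p j))) g hg
  have hbq : (fun j => qm T (cnj θ (a (Fin.natAdd p j)))) =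
      fun j => cnj (qm T θ) (qm T (a (Fin.natAdd p j))) := by
    funext j; exact map_cnj (qm T) θ _
  have hγθ : qm T γv = qm T θ := by
    rw [hγv, hbq, gpin_cnj, hθ, cnj_self]
  have hvb' : eval v (fun j => qm T (cnj θ (a (Fin.natAdd p j)))) =
      cnj (qm T θ) (eval v (fun j => qm T (a (Fin.natAdd p j)))) := by
    rw [hbq, ← eval_cnj]
  have VL : ∀ (Lv' : List (G × G)), (∀ pr ∈ Lv', NPair T v (fun j => cnj θ (a (Fin.natAdd p j))) pr) →
      ∀ S : G, qm T S = (eval v (fun j => qm T (cnj θ (a (Fin.natAdd p j)))))⁻¹ * (qm T θ)⁻¹ →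
      ∃ L : List (G × G), cnj S ⁅cnj γv P, prodP Lv'⁆ = prodP L ∧
        L.length = Lv'.length ∧ ∀ pr ∈ L, NPair T (u.comm v) a pr := by
    intro Lv'
    induction Lv' with
    | nil =>
        intro _ S hS
        refine ⟨[], ?_, rfl, by simp⟩
        rw [prodP_nil, K_one_right, cnj_one_right]
    | cons pr rest ih =>
        intro hval S hS
        obtain ⟨ρ₁, ρ₂, R₁, R₂, hρ₁, hρ₂, hR₁, hR₂, hpr1, hpr2⟩ :=
          hval pr (List.mem_cons_self)
        have hπR₁ : qm T R₁ = eval v (fun j => qm T (cnj θ (a (Fin.natAdd p j)))) :=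
          good_pi T hR₁
        have hπR₂ : qm T R₂ = eval v (fun j => qm T (cnj θ (a (Fin.natAdd p j)))) :=
          good_pi T hR₂
        have hπpr1 : qm T pr.1 = (eval v (fun j => qm T (cnj θ (a (Fin.natAdd p j)))))⁻¹ := by
          rw [hpr1, map_cnj, qm_eq_one T hρ₁, cnj_one, map_inv, hπR₁]
        have hπpr2 : qm T pr.2 = eval v (fun j => qm T (cnj θ (a (Fin.natAdd p j)))) := by
          rw [hpr2, map_cnj, qm_eq_one T hρ₂, cnj_one, hπR₂]
        have hSrest : qm T ((pr.1 * pr.2)⁻¹ * S) =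
            (eval v (fun j => qm T (cnj θ (a (Fin.natAdd p j)))))⁻¹ * (qm T θ)⁻¹ := by
          rw [map_mul, map_inv, map_mul, hπpr1, hπpr2, hS]
          group
        obtain ⟨Lrest, hLrest_eq, hLrest_len, hLrest_val⟩ :=
          ih (fun pr' hpr' => hval pr' (List.mem_cons_of_mem _ hpr')) ((pr.1 * pr.2)⁻¹ * S) hSrest
        have heq : cnj S ⁅cnj γv P, prodP (pr :: rest)⁆ =
            (cnj (θ * (R₁ * ρ₁ * S)) (⁅cnj θ⁻¹ (cnj ρ₁⁻¹ (cnj γv P)), cnj θ⁻¹ R₁⁆)⁻¹ *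
              cnj (θ * (ρ₂ * (pr.1⁻¹ * S))) ⁅cnj θ⁻¹ (cnj ρ₂⁻¹ (cnj γv P)), cnj θ⁻¹ R₂⁆) *
              prodP Lrest := by
          rw [prodP_cons pr rest, id_step_split, ← hLrest_eq]
          congr 2
          · rw [hpr1, id_atom1]
          · rw [hpr2, id_atom2]
        have hτ₁T : (θ * (R₁ * ρ₁ * S)) ∈ T := by
          apply mem_of_qm_one
          simp only [map_mul, hπR₁, qm_eq_one T hρ₁, hS]
          group
        have hτ₂T : (θ * (ρ₂ * (pr.1⁻¹ * S))) ∈ T := by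
          apply mem_of_qm_one
          simp only [map_mul, map_inv, hπpr1, qm_eq_one T hρ₂, hS]
          group
        have hE₁ : qm T (γv * (ρ₁⁻¹ * θ⁻¹)) = 1 := by
          simp only [map_mul, map_inv, hγθ, qm_eq_one T hρ₁]
          group
        have hE₂ : qm T (γv * (ρ₂⁻¹ * θ⁻¹)) = 1 := by
          simp only [map_mul, map_inv, hγθ, qm_eq_one T hρ₂]
          group
        have hgood₁u : Good T u (fun i => a (Fin.castAdd q i)) (cnj θ⁻¹ (cnj ρ₁⁻¹ (cnj γv P))) := by
          rw [cnj_cnj, cnj_cnj]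
          exact good_cnj_triv T hP hE₁
        have hgood₂u : Good T u (fun i => a (Fin.castAdd q i)) (cnj θ⁻¹ (cnj ρ₂⁻¹ (cnj γv P))) := by
          rw [cnj_cnj, cnj_cnj]
          exact good_cnj_triv T hP hE₂
        have hQ₁good : Good T (u.comm v) a ⁅cnj θ⁻¹ (cnj ρ₁⁻¹ (cnj γv P)), cnj θ⁻¹ R₁⁆ :=
          good_comm T hgood₁u (good_cnj_back T hR₁)
        have hQ₂good : Good T (u.comm v) a ⁅cnj θ⁻¹ (cnj ρ₂⁻¹ (cnj γv P)), cnj θ⁻¹ R₂⁆ :=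
          good_comm T hgood₂u (good_cnj_back T hR₂)
        refine ⟨(cnj (θ * (R₁ * ρ₁ * S)) (⁅cnj θ⁻¹ (cnj ρ₁⁻¹ (cnj γv P)), cnj θ⁻¹ R₁⁆)⁻¹,
                 cnj (θ * (ρ₂ * (pr.1⁻¹ * S))) ⁅cnj θ⁻¹ (cnj ρ₂⁻¹ (cnj γv P)), cnj θ⁻¹ R₂⁆) :: Lrest,
                ?_, by simp [hLrest_len], ?_⟩
        · rw [heq, prodP_cons]
        · rintro pr' hpr'
          rcases List.mem_cons.mp hpr' with h' | h'
          · subst h'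
            exact ⟨_, _, _, _, hτ₁T, hτ₂T, hQ₁good, hQ₂good, rfl, rfl⟩
          · exact hLrest_val pr' h'
  have hVg : cnj h ⁅P, v.eval g⁆ = cnj (γv⁻¹ * h) ⁅cnj γv P, prodP Lv⁆ := by
    have hv : v.eval g = cnj γv⁻¹ (prodP Lv) := by
      rw [← heqv, cnj_cnj, mul_inv_cancel, cnj_one]
    rw [hv, id_dblock_init]
  have hSinit : qm T (γv⁻¹ * h) =
      (eval v (fun j => qm T (cnj θ (a (Fin.natAdd p j)))))⁻¹ * (qm T θ)⁻¹ := by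
    rw [map_mul, map_inv, hγθ, hh, hvb']
    simp only [cnj]
    group
  obtain ⟨L, hLeq, hLlen, hLval⟩ := VL Lv hLv (γv⁻¹ * h) hSinit
  refine ⟨L, by rw [hVg, hLeq], by rw [hLlen]; exact hlenv, hLval⟩


lemma uloop {p q : ℕ} (u : MultilinearCommutatorWord p) (v : MultilinearCommutatorWord q)
    (a : Fin (p + q) → G) (ihv : DecProp T v) :
    ∀ (F : List G),
      (∀ x ∈ F, ∃ τ P, τ ∈ T ∧ Good T u (fun i => a (Fin.castAdd q i)) P ∧
        (x = cnj τ P ∨ x = cnj τ P⁻¹)) →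
      ∀ (g : Fin q → G), (∀ i, g i ∈ T) →
      ∀ (S : G), qm T S = (v.eval (fun j => qm T (a (Fin.natAdd p j))))⁻¹ →
      ∃ L : List (G × G), cnj S ⁅F.prod, v.eval g⁆ = prodP L ∧
        2 * L.length = F.length * 2 ^ q ∧ ∀ pr ∈ L, NPair T (u.comm v) a pr := by
  intro F
  induction F with
  | nil =>
      intro _ g hg S hS
      refine ⟨[], ?_, by simp, by simp⟩
      rw [List.prod_nil, K_one_left, cnj_one_right, prodP_nil]
  | cons x F' ih =>
      intro hF g hg S hS
      obtain ⟨τ, P, hτ, hPgood, hx⟩ := hF x (List.mem_cons_self)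
      have hF' : ∀ y ∈ F', ∃ τ P, τ ∈ T ∧ Good T u (fun i => a (Fin.castAdd q i)) P ∧
          (y = cnj τ P ∨ y = cnj τ P⁻¹) := fun y hy => hF y (List.mem_cons_of_mem _ hy)
      -- the rest term
      obtain ⟨L', hL'eq, hL'len, hL'val⟩ := ih hF' g hg S hS
      -- the new V after pulling conjugation inside
      have hτS : qm T (τ * S) = (v.eval (fun j => qm T (a (Fin.natAdd p j))))⁻¹ := by
        rw [map_mul, qm_eq_one T hτ, one_mul, hS]
      rcases hx with hx | hx
      · -- positive factor
        set g₃ : Fin q → G := fun i => cnj τ⁻¹ (cnj (F'.prod)⁻¹ (g i)) with hg₃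
        have hg₃T : ∀ i, g₃ i ∈ T := fun i =>
          cnj_mem T inferInstance _ (cnj_mem T inferInstance _ (hg i))
        have hVeq : cnj τ⁻¹ (cnj (F'.prod)⁻¹ (v.eval g)) = v.eval g₃ := by
          rw [eval_cnj, eval_cnj]
        obtain ⟨Lb, hLbeq, hLblen, hLbval⟩ :=
          dblock T u v a ihv hPgood hg₃T (h := τ * S) hτS
        refine ⟨Lb ++ L', ?_, ?_, ?_⟩
        · rw [List.prod_cons, id_ustep, hx, id_upos, hVeq, hLbeq, hL'eq, prodP_append]
        · rw [List.length_append, List.length_cons, Nat.mul_add, hLblen, hL'len,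
            Nat.add_mul, one_mul, Nat.add_comm]
        · intro pr hpr
          rcases List.mem_append.mp hpr with h' | h'
          · exact hLbval pr h'
          · exact hL'val pr h'
      · -- negative factor
        set g₄ : Fin q → G := fun i => cnj P (cnj τ⁻¹ (cnj (F'.prod)⁻¹ (g i))) with hg₄
        have hg₄T : ∀ i, g₄ i ∈ T := fun i =>
          cnj_mem T inferInstance _ (cnj_mem T inferInstance _ (cnj_mem T inferInstance _ (hg i)))
        have hVeq : cnj P (cnj τ⁻¹ (cnj (F'.prod)⁻¹ (v.eval g))) = v.eval g₄ := by
          rw [eval_cnj, eval_cnj, eval_cnj]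
        obtain ⟨Lb, hLbeq, hLblen, hLbval⟩ :=
          dblock T u v a ihv hPgood hg₄T (h := τ * S) hτS
        refine ⟨invP Lb ++ L', ?_, ?_, ?_⟩
        · rw [List.prod_cons, id_ustep, hx, id_uneg, hVeq, hLbeq, hL'eq, prodP_append,
            prodP_invP]
        · rw [List.length_append, invP_length, List.length_cons, Nat.mul_add, hLblen, hL'len,
            Nat.add_mul, one_mul, Nat.add_comm]
        · intro pr hpr
          rcases List.mem_append.mp hpr with h' | h'
          · obtain ⟨pr', hpr', rfl⟩ := mem_invP h'
            exact npair_inv T (hLbval pr' hpr')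
          · exact hL'val pr h'

lemma flat_length (L : List (G × G)) :
    (L.flatMap fun pr => [pr.1, pr.2]).length = 2 * L.length := by
  induction L with
  | nil => rfl
  | cons p L ih =>
      simp only [List.flatMap_cons, List.length_append, List.length_cons, List.length_nil, ih]
      omega

lemma prodP_eq_flat (L : List (G × G)) :
    prodP L = (L.flatMap fun pr => [pr.1, pr.2]).prod := by
  induction L with
  | nil => rfl
  | cons p L ih => simp [prodP_cons, ih, mul_assoc]

lemma dec_var : DecProp T MultilinearCommutatorWord.var := by
  intro a t ht
  refine ⟨1, [((a 0)⁻¹, a 0 * t 0)], by simp [gpin], ?_, rfl, ?_⟩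
  · show cnj 1 (t 0) = prodP _
    rw [cnj_one, prodP_cons, prodP_nil]
    group
  · rintro pr hpr
    rcases List.mem_singleton.mp hpr with rfl
    refine ⟨1, 1, a 0, a 0 * t 0, T.one_mem, T.one_mem, ?_, ?_, by rw [cnj_one], by rw [cnj_one]⟩
    · exact ⟨a, fun j => by rw [inv_mul_cancel]; exact T.one_mem, rfl⟩
    · refine ⟨fun j => a j * t 0, fun j => ?_, rfl⟩
      rw [← mul_assoc, inv_mul_cancel, one_mul]
      exact ht 0

lemma dec_comm {p q : ℕ} (u : MultilinearCommutatorWord p) (v : MultilinearCommutatorWord q)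
    (ihu : DecProp T u) (ihv : DecProp T v) : DecProp T (u.comm v) := by
  intro a t ht
  obtain ⟨γu, Lu, hγu, hequ, hlenu, hLu⟩ :=
    ihu (fun i => a (Fin.castAdd q i)) (fun i => t (Fin.castAdd q i))
      (fun i => ht (Fin.castAdd q i))
  set Γ : G := (v.eval (fun j => a (Fin.natAdd p j)))⁻¹ with hΓ
  set F : List G := Lu.flatMap fun pr => [pr.1, pr.2] with hF
  have hFfact : ∀ x ∈ F, ∃ τ P, τ ∈ T ∧ Good T u (fun i => a (Fin.castAdd q i)) P ∧
      (x = cnj τ P ∨ x = cnj τ P⁻¹) := by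
    intro x hx
    rw [hF] at hx
    simp only [List.mem_flatMap] at hx
    obtain ⟨pr, hpr, hmem⟩ := hx
    obtain ⟨τ₁, τ₂, Q₁, Q₂, ht₁, ht₂, hQ₁, hQ₂, h1, h2⟩ := hLu pr hpr
    simp only [List.mem_cons, List.not_mem_nil, or_false] at hmem
    rcases hmem with rfl | rfl
    · exact ⟨τ₁, Q₁, ht₁, hQ₁, Or.inr h1⟩
    · exact ⟨τ₂, Q₂, ht₂, hQ₂, Or.inl h2⟩
  have hFlen : F.length = 2 * Lu.length := flat_length Lu
  have hΓq : qm T Γ = (v.eval (fun j => qm T (a (Fin.natAdd p j))))⁻¹ := by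
    rw [hΓ, map_inv, eval_map]
  have hg₁T : ∀ j, cnj γu (t (Fin.natAdd p j)) ∈ T :=
    fun j => cnj_mem T inferInstance _ (ht _)
  obtain ⟨L, hLeq, hLlen, hLval⟩ :=
    uloop T u v a ihv F hFfact (fun j => cnj γu (t (Fin.natAdd p j))) hg₁T Γ hΓq
  refine ⟨γu * Γ, L, ?_, ?_, ?_, hLval⟩
  · rw [map_mul, hγu, hΓ, map_inv, eval_map]
    rfl
  · show cnj (γu * Γ)
      ⁅u.eval (fun i => t (Fin.castAdd q i)), v.eval (fun j => t (Fin.natAdd p j))⁆ = prodP L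
    rw [id_assemble, eval_cnj v, hequ, prodP_eq_flat, ← hF, hLeq]
  · rw [hLlen, hFlen, hlenu, pow_add]

theorem dec : ∀ {n : ℕ} (w : MultilinearCommutatorWord n), DecProp T w
  | _, .var => dec_var T
  | _, .comm u v => dec_comm T u v (dec u) (dec v)


end Quot

/-! ### Counting conjugates -/

def Small (M : ℕ) (g : G) : Prop :=
  {y : G | IsConj g y}.Finite ∧ {y : G | IsConj g y}.ncard ≤ M

lemma clsSet_eq_of_isConj {g h : G} (hgh : IsConj g h) :
    {y : G | IsConj g y} = {y : G | IsConj h y} :=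
  Set.ext fun x => ⟨fun hx => hgh.symm.trans hx, fun hx => hgh.trans hx⟩

lemma small_of_isConj {M : ℕ} {g h : G} (hgh : IsConj g h) (hs : Small M g) : Small M h := by
  unfold Small at hs ⊢
  rwa [← clsSet_eq_of_isConj hgh]

lemma isConj_cnj (c g : G) : IsConj g (cnj c g) := by
  rw [isConj_iff]
  exact ⟨c⁻¹, by simp only [cnj]; group⟩

lemma small_cnj {M : ℕ} {g : G} (c : G) (hs : Small M g) : Small M (cnj c g) :=
  small_of_isConj (isConj_cnj c g) hs

lemma small_mono {M M' : ℕ} {g : G} (h : M ≤ M') (hs : Small M g) : Small M' g :=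
  ⟨hs.1, hs.2.trans h⟩

lemma isConj_inv' {a b : G} (h : IsConj a b) : IsConj a⁻¹ b⁻¹ := by
  rw [isConj_iff] at h ⊢
  obtain ⟨c, rfl⟩ := h
  exact ⟨c, by group⟩

lemma small_inv {M : ℕ} {g : G} (hs : Small M g) : Small M g⁻¹ := by
  have hset : {y : G | IsConj g⁻¹ y} = Inv.inv '' {y : G | IsConj g y} := by
    ext y
    constructor
    · intro hy
      refine ⟨y⁻¹, ?_, inv_inv y⟩
      simpa using isConj_inv' hy
    · rintro ⟨z, hz, rfl⟩
      exact isConj_inv' hz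
  constructor
  · rw [hset]; exact hs.1.image _
  · rw [hset, Set.ncard_image_of_injective _ inv_injective]
    exact hs.2

lemma small_one {M : ℕ} (hM : 1 ≤ M) : Small M (1 : G) := by
  have hset : {y : G | IsConj (1 : G) y} = {1} := by
    ext y
    simp only [Set.mem_setOf_eq, Set.mem_singleton_iff]
    constructor
    · intro hy; exact isConj_one_left.mp hy.symm
    · rintro rfl; exact IsConj.refl 1
  constructor
  · rw [hset]; exact Set.finite_singleton 1
  · rw [hset, Set.ncard_singleton]; exact hM

lemma small_mul {M₁ M₂ : ℕ} {x y : G} (hx : Small M₁ x) (hy : Small M₂ y) :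
    Small (M₁ * M₂) (x * y) := by
  have hsub : {z : G | IsConj (x * y) z} ⊆
      Set.image2 (· * ·) {z : G | IsConj x z} {z : G | IsConj y z} := by
    intro z hz
    rw [Set.mem_setOf_eq, isConj_iff] at hz
    obtain ⟨c, rfl⟩ := hz
    refine ⟨c * x * c⁻¹, isConj_iff.mpr ⟨c, rfl⟩, c * y * c⁻¹, isConj_iff.mpr ⟨c, rfl⟩, ?_⟩
    group
  have hfin : (Set.image2 (· * ·) {z : G | IsConj x z} {z : G | IsConj y z}).Finite :=
    hx.1.image2 _ hy.1
  constructor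
  · exact hfin.subset hsub
  · calc {z : G | IsConj (x * y) z}.ncard
        ≤ (Set.image2 (· * ·) {z : G | IsConj x z} {z : G | IsConj y z}).ncard :=
          Set.ncard_le_ncard hsub hfin
      _ ≤ {z : G | IsConj x z}.ncard * {z : G | IsConj y z}.ncard := by
          rw [← Set.image_prod]
          calc ((fun p : G × G => p.1 * p.2) '' ({z : G | IsConj x z} ×ˢ {z : G | IsConj y z})).ncard
              ≤ ({z : G | IsConj x z} ×ˢ {z : G | IsConj y z}).ncard :=
                Set.ncard_image_le (hx.1.prod hy.1)
            _ = _ := by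
                have : ({z : G | IsConj x z} ×ˢ {z : G | IsConj y z}).ncard =
                    Nat.card (({z : G | IsConj x z} ×ˢ {z : G | IsConj y z} : Set (G × G))) := rfl
                rw [this, Nat.card_congr (Equiv.Set.prod _ _), Nat.card_prod]
                rfl
      _ ≤ M₁ * M₂ := Nat.mul_le_mul hx.2 hy.2

lemma small_prodP (m : ℕ) : ∀ (L : List (G × G)),
    (∀ p ∈ L, Small m p.1 ∧ Small m p.2) → Small (m ^ (2 * L.length)) (prodP L)
  | [], _ => by
      rw [prodP_nil]
      exact small_one (by simp)
  | p :: L, h => by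
      rw [prodP_cons]
      have h1 := (h p (List.mem_cons_self)).1
      have h2 := (h p (List.mem_cons_self)).2
      have hrest := small_prodP m L (fun p' hp' => h p' (List.mem_cons_of_mem _ hp'))
      have := small_mul (small_mul h1 h2) hrest
      refine small_mono (le_of_eq ?_) this
      rw [List.length_cons]
      ring

end MCWAux


/-- Let `w` be a multilinear commutator word on `n` variables, `G` a group, `T` a normal
subgroup of `G`, and `a 0, ..., a (n-1)` elements of `G` such that every element of
`X_w(a 0 T, ..., a (n-1) T)` has at most `m` conjugates in `G`. Then every `w`-value on a
tuple of elements of `T` has at most `m ^ 2 ^ n` conjugates in `G`. -/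
theorem conjugates_of_values_in_normal_subgroup {G : Type*} [Group G]
    {n : ℕ} (w : MultilinearCommutatorWord n) (T : Subgroup G) (hT : T.Normal)
    (m : ℕ) (a : Fin n → G)
    (hm : ∀ g : G, (∃ f : Fin n → G, (∀ i, (a i)⁻¹ * f i ∈ T) ∧ w.eval f = g) →
      {y : G | IsConj g y}.Finite ∧ {y : G | IsConj g y}.ncard ≤ m) :
    ∀ g : G, (∃ f : Fin n → G, (∀ i, f i ∈ T) ∧ w.eval f = g) →
      {y : G | IsConj g y}.Finite ∧ {y : G | IsConj g y}.ncard ≤ m ^ 2 ^ n := by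
  haveI := hT
  intro g hg
  obtain ⟨f, hfT, hfg⟩ := hg
  subst hfg
  obtain ⟨γ, L, hpin, heq, hlen, hval⟩ := MCWAux.dec T w a f hfT
  have hfac : ∀ p ∈ L, MCWAux.Small m p.1 ∧ MCWAux.Small m p.2 := by
    intro p hp
    obtain ⟨τ₁, τ₂, Q₁, Q₂, ht₁, ht₂, ⟨c₁, hc₁, hv₁⟩, ⟨c₂, hc₂, hv₂⟩, h1, h2⟩ := hval p hp
    have hQ₁ : MCWAux.Small m Q₁ := hm Q₁ ⟨c₁, hc₁, hv₁.symm⟩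
    have hQ₂ : MCWAux.Small m Q₂ := hm Q₂ ⟨c₂, hc₂, hv₂.symm⟩
    constructor
    · rw [h1]; exact MCWAux.small_cnj _ (MCWAux.small_inv hQ₁)
    · rw [h2]; exact MCWAux.small_cnj _ hQ₂
  have h1 := MCWAux.small_prodP m L hfac
  rw [hlen] at h1
  have h2 : IsConj (w.eval f) (MCWAux.prodP L) := heq ▸ MCWAux.isConj_cnj γ (w.eval f)
  exact MCWAux.small_of_isConj h2.symm h1
end

section
/- Let w = w(x_1,...,x_n) be a multilinear commutator word. There exists a positive integer t_n, depending only on n, such that for every group G, every normal subgroup H of G, all g_1,...,g_n ∈ G, and all h_1,...,h_n ∈ H, the w-value w(g_1h_1,...,g_nh_n) can be written as w(g_1h_1,...,g_nh_n) = a·h, where a is a product of at most t_n conjugates in G of elements of the set {g_1^{±1},...,g_n^{±1}} and h is a w-value of H. -/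
open scoped commutatorElement

universe u

section Aux

variable {G : Type*} [Group G]

lemma MCW_pos : ∀ {k : ℕ}, MultilinearCommutatorWord k → 1 ≤ k
  | _, .var => le_refl 1
  | _, .comm u _ => le_trans (MCW_pos u) (Nat.le_add_right _ _)

lemma conjL_prod (c : G) (L : List G) :
    (L.map (fun z => c * z * c⁻¹)).prod = c * L.prod * c⁻¹ := by
  induction L with
  | nil => simp
  | cons aa t ih => simp only [List.map_cons, List.prod_cons, ih]; group

lemma invL_prod (L : List G) : ((L.map (fun z => z⁻¹)).reverse).prod = L.prod⁻¹ := by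
  induction L with
  | nil => simp
  | cons aa t ih => simp [ih]

/-- `z` is a conjugate of some `g i` or `(g i)⁻¹`. -/
def IsConjGen {n : ℕ} (g : Fin n → G) (z : G) : Prop :=
  ∃ (c : G) (i : Fin n), z = c * g i * c⁻¹ ∨ z = c * (g i)⁻¹ * c⁻¹

lemma IsConjGen.inv {n : ℕ} {g : Fin n → G} {z : G} (h : IsConjGen g z) :
    IsConjGen g z⁻¹ := by
  obtain ⟨c, i, h | h⟩ := h
  · exact ⟨c, i, Or.inr (by rw [h]; group)⟩
  · exact ⟨c, i, Or.inl (by rw [h]; group)⟩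

lemma IsConjGen.conj {n : ℕ} {g : Fin n → G} {z : G} (d : G) (h : IsConjGen g z) :
    IsConjGen g (d * z * d⁻¹) := by
  obtain ⟨c, i, h | h⟩ := h
  · exact ⟨d * c, i, Or.inl (by rw [h]; group)⟩
  · exact ⟨d * c, i, Or.inr (by rw [h]; group)⟩

lemma isConjGen_comp {m n : ℕ} {g : Fin n → G} (e : Fin m → Fin n) {z : G}
    (h : IsConjGen (fun i => g (e i)) z) : IsConjGen g z := by
  obtain ⟨c, i, h⟩ := h
  exact ⟨c, e i, h⟩

lemma forall_invL {n : ℕ} {g : Fin n → G} {L : List G} (h : ∀ z ∈ L, IsConjGen g z) :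
    ∀ z ∈ (L.map (fun z => z⁻¹)).reverse, IsConjGen g z := by
  intro z hz
  rw [List.mem_reverse, List.mem_map] at hz
  obtain ⟨w, hw, rfl⟩ := hz
  exact (h w hw).inv

lemma forall_conjL {n : ℕ} {g : Fin n → G} {L : List G} (d : G)
    (h : ∀ z ∈ L, IsConjGen g z) :
    ∀ z ∈ L.map (fun z => d * z * d⁻¹), IsConjGen g z := by
  intro z hz
  rw [List.mem_map] at hz
  obtain ⟨w, hw, rfl⟩ := hz
  exact (h w hw).conj d

lemma eval_conj {n : ℕ} (w : MultilinearCommutatorWord n) (c : G) :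
    ∀ f : Fin n → G, w.eval (fun i => c * f i * c⁻¹) = c * w.eval f * c⁻¹ := by
  induction w with
  | var => intro f; rfl
  | comm u v ihu ihv =>
      intro f
      show ⁅MultilinearCommutatorWord.eval u fun i => c * f (Fin.castAdd _ i) * c⁻¹,
            MultilinearCommutatorWord.eval v fun j => c * f (Fin.natAdd _ j) * c⁻¹⁆ = _
      rw [ihu (fun i => f (Fin.castAdd _ i)), ihv (fun j => f (Fin.natAdd _ j))]
      show ⁅_, _⁆ = c * ⁅_, _⁆ * c⁻¹
      simp only [commutatorElement_def]
      group

end Aux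

/-- For every `n` there is a positive integer `t` depending only on `n` such that for every
multilinear commutator word `w` on `n` variables, every group `G`, every normal subgroup
`H` of `G` and all `g i ∈ G`, `h i ∈ H`, the value `w(g 0 * h 0, ..., g (n-1) * h (n-1))`
can be written as `a * x` where `a` is a product of at most `t` conjugates in `G` of
elements of `{g i, (g i)⁻¹}` and `x` is a `w`-value of `H`. -/
theorem value_decomposition_mod_normal (n : ℕ) :
    ∃ t : ℕ, 0 < t ∧ ∀ {G : Type u} [Group G] (w : MultilinearCommutatorWord n)
      (H : Subgroup G), H.Normal → ∀ (g h : Fin n → G), (∀ i, h i ∈ H) →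
      ∃ (a x : G) (L : List G),
        w.eval (fun i => g i * h i) = a * x ∧
        a = L.prod ∧ L.length ≤ t ∧
        (∀ z ∈ L, ∃ (c : G) (i : Fin n), z = c * g i * c⁻¹ ∨ z = c * (g i)⁻¹ * c⁻¹) ∧
        (∃ f : Fin n → G, (∀ i, f i ∈ H) ∧ w.eval f = x) := by
  refine ⟨6 ^ n, pow_pos (by norm_num) _, ?_⟩
  intro G _ w H hH
  induction w with
  | var =>
      intro g h hh
      refine ⟨g 0, h 0, [g 0], rfl, by simp, by norm_num, ?_, ⟨h, hh, rfl⟩⟩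
      intro z hz
      rw [List.mem_singleton] at hz
      exact ⟨1, 0, Or.inl (by rw [hz]; group)⟩
  | @comm m k u v ihu ihv =>
      intro g h hh
      obtain ⟨a, x, La, hux, haL, hLalen, hLamem, fu, hfu, hfux⟩ :=
        ihu (fun i => g (Fin.castAdd k i)) (fun i => h (Fin.castAdd k i)) (fun i => hh _)
      obtain ⟨b, y, Lb, hvy, hbL, hLblen, hLbmem, fv, hfv, hfvy⟩ :=
        ihv (fun j => g (Fin.natAdd m j)) (fun j => h (Fin.natAdd m j)) (fun j => hh _)
      set D : G := a * b * y * a⁻¹ * y⁻¹ * b⁻¹ with hD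
      set e : G := D⁻¹ * a * b with he
      set L : List G :=
        (Lb.map (fun z => (a * x) * z * (a * x)⁻¹)) ++
        ((Lb.map (fun z => z⁻¹)).reverse.map (fun z => a * z * a⁻¹)) ++
        (La ++ Lb ++ ((La.map (fun z => z⁻¹)).reverse.map (fun z => y * z * y⁻¹)) ++
          (Lb.map (fun z => z⁻¹)).reverse) with hL
      refine ⟨L.prod, e * ⁅x, y⁆ * e⁻¹, L, ?_, rfl, ?_, ?_, ?_⟩
      · -- the main identity
        show ⁅MultilinearCommutatorWord.eval u fun i =>
              g (Fin.castAdd k i) * h (Fin.castAdd k i),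
              MultilinearCommutatorWord.eval v fun j =>
              g (Fin.natAdd m j) * h (Fin.natAdd m j)⁆ = _
        rw [hux, hvy]
        have hprod : L.prod =
            ((a * x) * Lb.prod * (a * x)⁻¹) * (a * Lb.prod⁻¹ * a⁻¹) *
            (La.prod * Lb.prod * (y * La.prod⁻¹ * y⁻¹) * Lb.prod⁻¹) := by
          simp only [hL, List.prod_append, conjL_prod, invL_prod]
        rw [hprod, ← haL, ← hbL, he, hD]
        simp only [commutatorElement_def]
        group
      · -- length bound
        have h6m : 6 ≤ 6 ^ m := by
          calc 6 = 6 ^ 1 := (pow_one 6).symm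
          _ ≤ 6 ^ m := Nat.pow_le_pow_right (by norm_num) (MCW_pos u)
        have h6k : 6 ≤ 6 ^ k := by
          calc 6 = 6 ^ 1 := (pow_one 6).symm
          _ ≤ 6 ^ k := Nat.pow_le_pow_right (by norm_num) (MCW_pos v)
        have hlen : L.length = 2 * La.length + 4 * Lb.length := by
          simp only [hL, List.length_append, List.length_map, List.length_reverse]
          ring
        rw [hlen, pow_add]
        nlinarith [hLalen, hLblen, h6m, h6k]
      · -- membership
        have hLa' : ∀ z ∈ La, IsConjGen g z := fun z hz =>
          isConjGen_comp (Fin.castAdd k) (hLamem z hz)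
        have hLb' : ∀ z ∈ Lb, IsConjGen g z := fun z hz =>
          isConjGen_comp (Fin.natAdd m) (hLbmem z hz)
        intro z hz
        simp only [hL, List.mem_append] at hz
        rcases hz with ((hz | hz) | ((hz | hz) | hz) | hz)
        · exact forall_conjL _ hLb' z hz
        · exact forall_conjL _ (forall_invL hLb') z hz
        · exact hLa' z hz
        · exact hLb' z hz
        · exact forall_conjL _ (forall_invL hLa') z hz
        · exact forall_invL hLb' z hz
      · -- the w-value part
        refine ⟨Fin.addCases (fun i => e * fu i * e⁻¹) (fun j => e * fv j * e⁻¹), ?_, ?_⟩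
        · intro i
          induction i using Fin.addCases with
          | left i => simpa using hH.conj_mem _ (hfu i) e
          | right j => simpa using hH.conj_mem _ (hfv j) e
        · show ⁅MultilinearCommutatorWord.eval u fun i =>
              Fin.addCases (motive := fun _ => G) (fun i => e * fu i * e⁻¹)
                (fun j => e * fv j * e⁻¹) (Fin.castAdd k i),
              MultilinearCommutatorWord.eval v fun j =>
              Fin.addCases (motive := fun _ => G) (fun i => e * fu i * e⁻¹)
                (fun j => e * fv j * e⁻¹) (Fin.natAdd m j)⁆ = _
          have h1 : (fun i => Fin.addCases (motive := fun _ => G)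
              (fun i => e * fu i * e⁻¹) (fun j => e * fv j * e⁻¹) (Fin.castAdd k i)) =
              fun i => e * fu i * e⁻¹ := by
            funext i; simp
          have h2 : (fun j => Fin.addCases (motive := fun _ => G)
              (fun i => e * fu i * e⁻¹) (fun j => e * fv j * e⁻¹) (Fin.natAdd m j)) =
              fun j => e * fv j * e⁻¹ := by
            funext j; simp
          rw [h1, h2, eval_conj u e fu, eval_conj v e fv, hfux, hfvy]
          simp only [commutatorElement_def]
          group
end

section
/- Let G be a group, let Δ(G) be the set of FC-elements of G, and let x ∈ Δ(G). Then the normal closure in G of the subgroup [Δ(G), x] generated by all commutators [y, x] with y ∈ Δ(G) is finite. -/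
open scoped commutatorElement

section Aux

variable {G : Type*} [Group G]

/-- A conjugate of an element of finite order has finite order. -/
private lemma FC.isOfFinOrder_of_isConj {a b : G} (h : IsConj a b) (ha : IsOfFinOrder a) :
    IsOfFinOrder b := by
  obtain ⟨c, hc⟩ := isConj_iff.mp h
  obtain ⟨n, hn, h1⟩ := (isOfFinOrder_iff_pow_eq_one).mp ha
  refine (isOfFinOrder_iff_pow_eq_one).mpr ⟨n, hn, ?_⟩
  rw [← hc, conj_pow, h1, mul_one, mul_inv_cancel]

/-- An element of a subgroup whose underlying element has finite order has finite order. -/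
private lemma FC.isOfFinOrder_subtype {H : Subgroup G} {h : ↥H} (hh : IsOfFinOrder (h : G)) :
    IsOfFinOrder h := by
  obtain ⟨n, hn, h1⟩ := (isOfFinOrder_iff_pow_eq_one).mp hh
  refine (isOfFinOrder_iff_pow_eq_one).mpr ⟨n, hn, Subtype.ext ?_⟩
  push_cast
  exact h1

/-- The centralizer of an element with finite conjugacy class has finite index. -/
private lemma FC.finiteIndex_centralizer {a : G} (h : {t : G | IsConj a t}.Finite) :
    (Subgroup.centralizer {a} : Subgroup G).FiniteIndex := by
  have horb : MulAction.orbit (ConjAct G) a = {t : G | IsConj a t} := by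
    ext t
    rw [ConjAct.mem_orbit_conjAct, isConj_comm]
    rfl
  have hidx : (MulAction.stabilizer (ConjAct G) a).index ≠ 0 := by
    rw [MulAction.index_stabilizer, horb]
    exact ((Set.ncard_pos h).mpr ⟨a, IsConj.refl a⟩).ne'
  rw [Subgroup.centralizer_eq_comap_stabilizer]
  have hc := Subgroup.index_comap_of_surjective (H := MulAction.stabilizer (ConjAct G) a)
    (f := ((ConjAct.toConjAct (G := G)) : G ≃* ConjAct G).toMonoidHom) (MulEquiv.surjective _)
  exact ⟨by rw [← hc] at hidx; exact hidx⟩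

/-- If the quotient by the center is finite, the set of commutators is finite. -/
private lemma FC.finite_commutatorSet (K : Type*) [Group K]
    [Finite (K ⧸ Subgroup.center K)] : Finite (commutatorSet K) := by
  set Z := Subgroup.center K
  have cc : ∀ a b z : K, z ∈ Z → ⁅a * z, b⁆ = ⁅a, b⁆ := by
    intro a b z hz
    have hzb : b * z = z * b := Subgroup.mem_center_iff.mp hz b
    show a * z * b * (a * z)⁻¹ * b⁻¹ = ⁅a, b⁆
    calc a * z * b * (a * z)⁻¹ * b⁻¹ = a * (z * b) * (z⁻¹ * a⁻¹) * b⁻¹ := by group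
      _ = a * (b * z) * (z⁻¹ * a⁻¹) * b⁻¹ := by rw [← hzb]
      _ = a * b * a⁻¹ * b⁻¹ := by group
  have cc2 : ∀ a b z : K, z ∈ Z → ⁅a, b * z⁆ = ⁅a, b⁆ := by
    intro a b z hz
    calc ⁅a, b * z⁆ = ⁅b * z, a⁆⁻¹ := (commutatorElement_inv _ _).symm
      _ = ⁅b, a⁆⁻¹ := by rw [cc b a z hz]
      _ = ⁅a, b⁆ := commutatorElement_inv _ _
  have central : ∀ g : K, ∃ z ∈ Z, ((g : K ⧸ Z)).out = g * z := by
    intro g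
    refine ⟨g⁻¹ * ((g : K ⧸ Z)).out, ?_, by group⟩
    rw [← QuotientGroup.eq]
    exact (Quotient.out_eq' _).symm
  have key : ∀ a b : K, ⁅a, b⁆ = ⁅((a : K ⧸ Z)).out, ((b : K ⧸ Z)).out⁆ := by
    intro a b
    obtain ⟨za, hza, ea⟩ := central a
    obtain ⟨zb, hzb, eb⟩ := central b
    rw [ea, eb, cc _ _ _ hza, cc2 _ _ _ hzb]
  have hsub : commutatorSet K ⊆
      (fun p : (K ⧸ Z) × (K ⧸ Z) => ⁅p.1.out, p.2.out⁆) '' Set.univ := by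
    rintro _ ⟨a, b, rfl⟩
    exact ⟨((a : K ⧸ Z), (b : K ⧸ Z)), trivial, (key a b).symm⟩
  have : (commutatorSet K).Finite := (Set.finite_univ.image _).subset hsub
  exact this.to_subtype

/-- Schur-type result: if the centralizer of `s` has finite index, the commutator subgroup of
the closure of `s` is finite. -/
private lemma FC.finite_commutator_of_centralizer (s : Set G)
    (hfi : (Subgroup.centralizer s).FiniteIndex) :
    Finite (commutator ↥(Subgroup.closure s)) := by
  set H := Subgroup.closure s
  haveI := hfi
  have hZc : (Subgroup.centralizer s).subgroupOf H ≤ Subgroup.center ↥H := by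
    rintro ⟨z, hzH⟩ hz
    rw [Subgroup.mem_subgroupOf] at hz
    have hcomm : ∀ g ∈ H, Commute z g := by
      intro g hg
      induction hg using Subgroup.closure_induction with
      | mem a ha => exact ((Subgroup.mem_centralizer_iff.mp hz) a ha).symm
      | one => exact Commute.one_right z
      | mul u v hu hv ihu ihv => exact ihu.mul_right ihv
      | inv u hu ihu => exact ihu.inv_right
    rw [Subgroup.mem_center_iff]
    rintro ⟨g, hgH⟩
    exact Subtype.ext ((hcomm g hgH).symm)
  haveI : ((Subgroup.centralizer s).subgroupOf H).FiniteIndex :=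
    Subgroup.instFiniteIndex_subgroupOf _ _
  haveI : (Subgroup.center ↥H).FiniteIndex := Subgroup.finiteIndex_of_le hZc
  haveI : Finite (↥H ⧸ Subgroup.center ↥H) := Subgroup.finite_quotient_of_finiteIndex
  haveI : Finite (commutatorSet ↥H) := FC.finite_commutatorSet ↥H
  infer_instance

/-- The commutator of two FC-elements has finite order. -/
private lemma FC.isOfFinOrder_commutator {x y : G}
    (hx : {t : G | IsConj x t}.Finite) (hy : {t : G | IsConj y t}.Finite) :
    IsOfFinOrder ⁅y, x⁆ := by
  have hcx := FC.finiteIndex_centralizer hx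
  have hcy := FC.finiteIndex_centralizer hy
  haveI := hcx; haveI := hcy
  have heq : Subgroup.centralizer ({x, y} : Set G) =
      Subgroup.centralizer {x} ⊓ Subgroup.centralizer {y} := by
    ext g
    simp only [Subgroup.mem_centralizer_iff, Subgroup.mem_inf, Set.mem_insert_iff,
      Set.mem_singleton_iff, or_imp, forall_and, forall_eq]
  have hfi : (Subgroup.centralizer ({x, y} : Set G)).FiniteIndex := by
    rw [heq]; infer_instance
  haveI hcommF := FC.finite_commutator_of_centralizer ({x, y} : Set G) hfi
  set F := Subgroup.closure ({x, y} : Set G) with hF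
  have hxF : x ∈ F := Subgroup.subset_closure (by simp)
  have hyF : y ∈ F := Subgroup.subset_closure (by simp)
  have hmem : ⁅(⟨y, hyF⟩ : ↥F), (⟨x, hxF⟩ : ↥F)⁆ ∈ commutator ↥F :=
    Subgroup.commutator_mem_commutator (Subgroup.mem_top _) (Subgroup.mem_top _)
  have h1 : IsOfFinOrder (⟨_, hmem⟩ : ↥(commutator ↥F)) := isOfFinOrder_of_finite _
  have h2 := ((commutator ↥F).subtype.isOfFinOrder h1)
  have h3 := (F.subtype.isOfFinOrder h2)
  simpa using h3

/-- If `Q` is a finite set of elements of finite order contained in the closure of `s`, and the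
commutator subgroup of the closure of `s` is finite, then the closure of `Q` is finite. -/
private lemma FC.finite_closure_of_torsion_subset (s Q : Set G)
    (hQfin : Q.Finite) (hQs : Q ⊆ (Subgroup.closure s : Set G))
    (hQtor : ∀ q ∈ Q, IsOfFinOrder q)
    (hcomm : Finite (commutator ↥(Subgroup.closure s))) :
    Finite ↥(Subgroup.closure Q) := by
  set H := Subgroup.closure s with hH
  have hle : Subgroup.closure Q ≤ H := (Subgroup.closure_le _).mpr hQs
  set A := Abelianization ↥H with hA
  set ψ : ↥(Subgroup.closure Q) →* A :=
    (Abelianization.of).comp (Subgroup.inclusion hle) with hψ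
  set Q₀ : Set ↥H := ((↑) : ↥H → G) ⁻¹' Q with hQ₀
  have hQ₀fin : Q₀.Finite :=
    hQfin.preimage (Set.injOn_of_injective Subtype.coe_injective)
  set M : Subgroup A := Subgroup.closure (Abelianization.of '' Q₀) with hM
  -- M is finite
  haveI : Finite ↥(Abelianization.of '' Q₀) := (hQ₀fin.image _).to_subtype
  haveI hMfg : Group.FG ↥M := Group.closure_finite_fg _
  have hMtorall : ∀ a ∈ M, IsOfFinOrder a := by
    intro a ha
    induction ha using Subgroup.closure_induction with
    | mem g hg => by_cases h : True
                  · obtain ⟨h₀, h₀Q, rfl⟩ := hg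
                    exact Abelianization.of.isOfFinOrder
                      (FC.isOfFinOrder_subtype (hQtor _ h₀Q))
                  · exact absurd trivial h
    | one => exact IsOfFinOrder.one
    | mul u v hu hv ihu ihv => exact (Commute.all u v).isOfFinOrder_mul ihu ihv
    | inv u hu ihu => exact ihu.inv
  have hMtor : Monoid.IsTorsion ↥M := fun m => FC.isOfFinOrder_subtype (hMtorall m m.2)
  haveI hMfin : Finite ↥M := CommGroup.finite_of_fg_torsion ↥M hMtor
  -- the range of ψ is contained in M
  have hrange : ∀ n : ↥(Subgroup.closure Q), ψ n ∈ M := by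
    rintro ⟨g, hg⟩
    have : ∀ g' (hg' : g' ∈ Subgroup.closure Q), ∀ hH' : g' ∈ H,
        Abelianization.of (⟨g', hH'⟩ : ↥H) ∈ M := by
      intro g' hg'
      induction hg' using Subgroup.closure_induction with
      | mem a ha =>
          intro hH'
          exact Subgroup.subset_closure ⟨⟨a, hH'⟩, ha, rfl⟩
      | one =>
          intro hH'
          have h1 : (⟨(1 : G), hH'⟩ : ↥H) = 1 := rfl
          rw [h1, map_one]
          exact one_mem M
      | mul u v hu hv ihu ihv =>
          intro hH'
          have h1 : (⟨u * v, hH'⟩ : ↥H) = ⟨u, hle hu⟩ * ⟨v, hle hv⟩ := rfl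
          rw [h1, map_mul]
          exact mul_mem (ihu _) (ihv _)
      | inv u hu ihu =>
          intro hH'
          have h1 : (⟨u⁻¹, hH'⟩ : ↥H) = (⟨u, hle hu⟩ : ↥H)⁻¹ := rfl
          rw [h1, map_inv]
          exact inv_mem (ihu _)
    have hcoe : ψ ⟨g, hg⟩ = Abelianization.of (⟨g, hle hg⟩ : ↥H) := rfl
    rw [hcoe]
    exact this g hg (hle hg)
  -- the kernel of ψ is finite
  haveI hkerfin : Finite ↥ψ.ker := by
    have hinj : Function.Injective
        (fun k : ↥ψ.ker => (⟨Subgroup.inclusion hle k.1, by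
          have hk := k.2
          rw [MonoidHom.mem_ker] at hk
          exact (QuotientGroup.eq_one_iff _).mp hk⟩ : ↥(commutator ↥H))) := by
      intro k₁ k₂ h
      have h' : Subgroup.inclusion hle k₁.1 = Subgroup.inclusion hle k₂.1 :=
        congrArg Subtype.val h
      have h'' : (k₁.1 : G) = (k₂.1 : G) := congrArg (fun z : ↥H => (z : G)) h'
      exact Subtype.ext (Subtype.ext h'')
    exact Finite.of_injective _ hinj
  -- the range of ψ is finite
  haveI hrangefin : Finite ↥ψ.range := by
    have hsub : (ψ.range : Set A) ⊆ (M : Set A) := by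
      rintro _ ⟨n, rfl⟩
      exact hrange n
    exact (Set.Finite.subset (M.carrier.toFinite) hsub).to_subtype
  haveI : Finite (↥(Subgroup.closure Q) ⧸ ψ.ker) :=
    Finite.of_equiv _ (QuotientGroup.quotientKerEquivRange ψ).symm.toEquiv
  exact Finite.of_equiv _ (Subgroup.groupEquivQuotientProdSubgroup (s := ψ.ker)).symm

end Aux

/-- Let `G` be a group and `x` an FC-element of `G` (an element with finite conjugacy
class). Then the normal closure in `G` of the subgroup generated by the commutators
`[y, x]` with `y` ranging over the FC-elements of `G` is finite. -/
theorem normalClosure_commutators_with_FC_finite {G : Type*} [Group G]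
    (x : G) (hx : {y : G | IsConj x y}.Finite) :
    ((Subgroup.normalClosure
        {z : G | ∃ y : G, {t : G | IsConj y t}.Finite ∧ z = ⁅y, x⁆}) : Set G).Finite := by
  set S := {z : G | ∃ y : G, {t : G | IsConj y t}.Finite ∧ z = ⁅y, x⁆} with hS
  set C := {t : G | IsConj x t} with hC
  have hCfin : C.Finite := hx
  -- the centralizer of C has finite index
  haveI := hCfin.to_subtype
  have hclass : ∀ c : C, {t : G | IsConj (c : G) t}.Finite := by
    intro c
    have : {t : G | IsConj (c : G) t} = C := by
      ext t
      exact ⟨fun h => c.2.trans h, fun h => c.2.symm.trans h⟩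
    rw [this]; exact hCfin
  have hC_eq : Subgroup.centralizer C = ⨅ c : C, Subgroup.centralizer {(c : G)} := by
    ext g
    simp only [Subgroup.mem_centralizer_iff, Subgroup.mem_iInf, Set.mem_singleton_iff, forall_eq]
    exact ⟨fun h c => h c c.2, fun h a ha => h ⟨a, ha⟩⟩
  have hZ : (Subgroup.centralizer C).FiniteIndex := by
    rw [hC_eq]
    exact Subgroup.finiteIndex_iInf fun c => FC.finiteIndex_centralizer (hclass c)
  have hcommH := FC.finite_commutator_of_centralizer C hZ
  -- the set of conjugates of S
  set Q := Group.conjugatesOfSet S with hQ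
  have hQsub : ∀ q ∈ Q, (∃ c₁ ∈ C, ∃ c₂ ∈ C, q = c₁ * c₂⁻¹) ∧ IsOfFinOrder q := by
    intro q hq
    rw [Group.mem_conjugatesOfSet_iff] at hq
    obtain ⟨a, haS, hconj⟩ := hq
    obtain ⟨y, hyFC, rfl⟩ := haS
    obtain ⟨g, hg⟩ := isConj_iff.mp hconj
    constructor
    · refine ⟨g * y * x * (g * y)⁻¹, isConj_iff.mpr ⟨g * y, rfl⟩,
        g * x * g⁻¹, isConj_iff.mpr ⟨g, rfl⟩, ?_⟩
      rw [← hg]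
      group
    · exact FC.isOfFinOrder_of_isConj hconj (FC.isOfFinOrder_commutator hx hyFC)
  have hQfin : Q.Finite := by
    apply Set.Finite.subset ((hCfin.prod hCfin).image (fun p : G × G => p.1 * p.2⁻¹))
    intro q hq
    obtain ⟨⟨c₁, h1, c₂, h2, rfl⟩, -⟩ := hQsub q hq
    exact ⟨(c₁, c₂), ⟨h1, h2⟩, rfl⟩
  have hQH : Q ⊆ (Subgroup.closure C : Set G) := by
    intro q hq
    obtain ⟨⟨c₁, h1, c₂, h2, rfl⟩, -⟩ := hQsub q hq
    exact mul_mem (Subgroup.subset_closure h1) (inv_mem (Subgroup.subset_closure h2))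
  have hQtor : ∀ q ∈ Q, IsOfFinOrder q := fun q hq => (hQsub q hq).2
  have hfin : Finite ↥(Subgroup.closure Q) :=
    FC.finite_closure_of_torsion_subset C Q hQfin hQH hQtor hcommH
  have hNeq : Subgroup.normalClosure S = Subgroup.closure Q := rfl
  rw [hNeq]
  exact Set.finite_coe_iff.mp hfin
end

section
/- Let G be a locally nilpotent group that is residually finite and contains an element x whose centralizer C_G(x) is finite. Then G is finite. -/
open scoped commutatorElement

/-- A locally nilpotent, residually finite group containing an element with finite
centralizer is finite. -/
theorem finite_of_locallyNilpotent_residuallyFinite {G : Type*} [Group G]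
    (hln : ∀ S : Set G, S.Finite → Group.IsNilpotent (Subgroup.closure S))
    (hrf : ∀ g : G, g ≠ 1 → ∃ N : Subgroup G, N.Normal ∧ N.FiniteIndex ∧ g ∉ N)
    (x : G) (hx : (Subgroup.centralizer {x} : Set G).Finite) :
    Finite G := by
  classical
  set C : Subgroup G := Subgroup.centralizer {x} with hC
  -- index over nontrivial elements of the centralizer
  let ι := {c : G // c ∈ C ∧ c ≠ 1}
  have hιfin : Finite ι := by
    have : ({c : G | c ∈ C ∧ c ≠ 1} : Set G).Finite :=
      hx.subset (fun c hc => hc.1)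
    exact this.to_subtype
  choose Nc hNcNormal hNcFI hNcnotmem using fun i : ι => hrf i.1 i.2.2
  set K : Subgroup G := ⨅ i : ι, Nc i with hK
  have hKNormal : K.Normal := by
    constructor
    intro n hn g
    rw [hK, Subgroup.mem_iInf] at hn ⊢
    intro i
    exact (hNcNormal i).conj_mem n (hn i) g
  have hKFI : K.FiniteIndex := Subgroup.finiteIndex_iInf hNcFI
  -- K meets the centralizer trivially
  have hKC : ∀ g : G, g ∈ K → g ∈ C → g = 1 := by
    intro g hgK hgC
    by_contra hg
    exact hNcnotmem ⟨g, hgC, hg⟩ (Subgroup.mem_iInf.mp hgK ⟨g, hgC, hg⟩)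
  -- K is trivial
  have hKbot : K = ⊥ := by
    rw [eq_bot_iff]
    intro g hgK
    rw [Subgroup.mem_bot]
    by_contra hg
    -- work in the nilpotent subgroup generated by x and g
    set H : Subgroup G := Subgroup.closure {x, g} with hH
    haveI hnil : Group.IsNilpotent H :=
      hln {x, g} ((Set.finite_singleton g).insert x)
    have hxH : x ∈ H := Subgroup.subset_closure (by simp)
    have hgH : g ∈ H := Subgroup.subset_closure (by simp)
    set xh : H := ⟨x, hxH⟩
    set gh : H := ⟨g, hgH⟩
    -- iterated commutators with x
    let w : ℕ → H := fun n => Nat.rec gh (fun _ u => ⁅u, xh⁆) n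
    have hw0 : w 0 = gh := rfl
    have hwsucc : ∀ n, w (n + 1) = ⁅w n, xh⁆ := fun n => rfl
    -- each w n lies in the lower central series
    have hwlcs : ∀ n, w n ∈ Subgroup.lowerCentralSeries (⊤ : Subgroup H) n := by
      intro n
      induction n with
      | zero => exact Subgroup.mem_top _
      | succ n ih =>
        rw [hwsucc, lowerCentralSeries_succ]
        exact Subgroup.commutator_mem_commutator ih (Subgroup.mem_top _)
    -- each w n lies in K (as element of G)
    have hwK : ∀ n, (w n).1 ∈ K := by
      intro n
      induction n with
      | zero => exact hgK
      | succ n ih =>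
        rw [hwsucc]
        have : ((⁅w n, xh⁆ : H) : G) = ⁅(w n).1, x⁆ := rfl
        rw [this, commutatorElement_def]
        -- ⁅a, x⁆ = a * x * a⁻¹ * x⁻¹ = (a * x * a⁻¹ * x⁻¹)
        have h2 : x * (w n).1⁻¹ * x⁻¹ ∈ K := hKNormal.conj_mem _ (K.inv_mem ih) x
        have : (w n).1 * x * (w n).1⁻¹ * x⁻¹
            = (w n).1 * (x * (w n).1⁻¹ * x⁻¹) := by group
        rw [this]
        exact K.mul_mem ih h2
    -- some w n is 1
    obtain ⟨m, hm⟩ := nilpotent_iff_lowerCentralSeries.mp hnil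
    have hwm : w m = 1 := by
      have := hwlcs m
      rw [hm, Subgroup.mem_bot] at this
      exact this
    -- find j with w j ≠ 1 and w (j+1) = 1
    have hg' : w 0 ≠ 1 := by
      rw [hw0]; intro h; exact hg (congrArg Subtype.val h)
    have key : ∀ n, w n = 1 → ∃ j, w j ≠ 1 ∧ w (j + 1) = 1 := by
      intro n
      induction n with
      | zero => intro h; exact absurd h hg'
      | succ n ih =>
        intro h
        rcases Classical.em (w n = 1) with hn | hn
        · exact ih hn
        · exact ⟨n, hn, h⟩
    obtain ⟨j, hwj_ne, hwj1⟩ := key m hwm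
    have hcomm : ⁅w j, xh⁆ = 1 := by
      rw [← hwsucc]; exact hwj1
    -- w j centralizes x
    have hwjC : (w j).1 ∈ C := by
      rw [hC]
      rw [Subgroup.mem_centralizer_iff]
      intro h hh
      rw [Set.mem_singleton_iff] at hh
      rw [hh]
      have : ⁅(w j).1, x⁆ = 1 := by
        have : ((⁅w j, xh⁆ : H) : G) = ⁅(w j).1, x⁆ := rfl
        rw [← this, hcomm]; rfl
      exact (commutatorElement_eq_one_iff_mul_comm.mp this).symm
    have : (w j).1 = 1 := hKC _ (hwK j) hwjC
    exact hwj_ne (Subtype.ext this)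
  -- K = ⊥ has finite index, so G is finite
  have : (⊥ : Subgroup G).index ≠ 0 := by
    rw [← hKbot]; exact hKFI.index_ne_zero
  rw [Subgroup.index_bot] at this
  rcases Nat.card_eq_zero.not.mp this |> not_or.mp with ⟨h1, h2⟩
  exact not_infinite_iff_finite.mp h2
end

section
/- Let G be a locally finite group and x an element of G such that the centralizer C_G(x) is finite of order m. Then for every normal subgroup N of G, the centralizer of the coset xN in the quotient group G/N has order at most m. -/
/-- Key counting lemma: there is no injective family of `m+1` elements of the
centralizer of `x N` in `G ⧸ N`. -/
lemma centralizer_quotient_no_inj {G : Type*} [Group G]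
    (hlf : ∀ S : Set G, S.Finite → (Subgroup.closure S : Set G).Finite)
    (x : G) (m : ℕ)
    (hfin : (Subgroup.centralizer {x} : Set G).Finite)
    (hcard : Nat.card (Subgroup.centralizer ({x} : Set G)) = m)
    (N : Subgroup G) [N.Normal]
    (f : Fin (m + 1) → G ⧸ N)
    (hf : ∀ i, f i ∈ Subgroup.centralizer {(QuotientGroup.mk x : G ⧸ N)})
    (hinj : Function.Injective f) : False := by
  classical
  set y : Fin (m + 1) → G := fun i => Quotient.out (f i) with hy_def
  have hy : ∀ i, (QuotientGroup.mk (y i) : G ⧸ N) = f i := fun i => QuotientGroup.out_eq' (f i)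
  set S : Set G := {x} ∪ Set.range y with hS_def
  have hS : S.Finite := (Set.finite_singleton x).union (Set.finite_range y)
  set H : Subgroup G := Subgroup.closure S with hH_def
  have hHfin : (H : Set G).Finite := hlf S hS
  have hHfin' : Finite H := hHfin.to_subtype
  have hxH : x ∈ H := Subgroup.subset_closure (Or.inl rfl)
  have hyH : ∀ i, y i ∈ H := fun i => Subgroup.subset_closure (Or.inr ⟨i, rfl⟩)
  set K : Subgroup G :=
    (Subgroup.centralizer {(QuotientGroup.mk x : G ⧸ N)}).comap (QuotientGroup.mk' N) ⊓ H
    with hK_def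
  have hKle : K ≤ H := inf_le_right
  have hKfin : Finite K := Finite.of_injective
    (fun k : K => (⟨(k : G), hKle k.2⟩ : H)) (by
      intro a b hab
      have := congrArg (fun z : H => (z : G)) hab
      exact Subtype.ext this)
  have hyK : ∀ i, y i ∈ K := by
    intro i
    refine ⟨Subgroup.mem_comap.mpr ?_, hyH i⟩
    show (QuotientGroup.mk (y i) : G ⧸ N) ∈ _
    rw [hy i]
    exact hf i
  -- commuting fact for elements of K
  have hcomm : ∀ h : G, h ∈ K → (h * x * h⁻¹ * x⁻¹) ∈ N := by
    intro h hh
    have h1 : (QuotientGroup.mk h : G ⧸ N) ∈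
        Subgroup.centralizer {(QuotientGroup.mk x : G ⧸ N)} := hh.1
    have h2 : (QuotientGroup.mk x : G ⧸ N) * QuotientGroup.mk h =
        QuotientGroup.mk h * QuotientGroup.mk x := by
      exact h1 (QuotientGroup.mk x) rfl
    rw [← QuotientGroup.eq_one_iff]
    have : (QuotientGroup.mk (h * x * h⁻¹ * x⁻¹) : G ⧸ N) =
        QuotientGroup.mk h * QuotientGroup.mk x * (QuotientGroup.mk h)⁻¹ *
          (QuotientGroup.mk x)⁻¹ := by
      simp [QuotientGroup.mk_mul, QuotientGroup.mk_inv]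
    rw [this, ← h2]
    group
  set N' : Subgroup K := N.subgroupOf K with hN'_def
  set C' : Subgroup K := (Subgroup.centralizer {x}).subgroupOf K with hC'_def
  have hCfin : Finite (Subgroup.centralizer ({x} : Set G)) := hfin.to_subtype
  -- card C' ≤ m
  have hC'le : Nat.card C' ≤ m := by
    rw [← hcard]
    exact Nat.card_le_card_of_injective
      (fun c : C' => (⟨(c : K), (Subgroup.mem_subgroupOf).mp c.2⟩ :
        Subgroup.centralizer ({x} : Set G)))
      (by intro a b hab
          have := congrArg (fun z : Subgroup.centralizer ({x} : Set G) => (z : G)) hab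
          exact Subtype.ext (Subtype.ext this))
  -- the commutator map g : K → N'
  have hgmemK : ∀ h : K, ((h : G) * x * (h : G)⁻¹ * x⁻¹) ∈ K := by
    intro h
    constructor
    · refine Subgroup.mem_comap.mpr ?_
      show (QuotientGroup.mk ((h : G) * x * (h : G)⁻¹ * x⁻¹) : G ⧸ N) ∈ _
      have h1 : ((h : G) * x * (h : G)⁻¹ * x⁻¹) ∈ N := hcomm (h : G) h.2
      have : (QuotientGroup.mk ((h : G) * x * (h : G)⁻¹ * x⁻¹) : G ⧸ N) = 1 :=
        (QuotientGroup.eq_one_iff _).mpr h1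
      rw [this]
      exact Subgroup.one_mem _
    · have hh : (h : G) ∈ H := hKle h.2
      exact H.mul_mem (H.mul_mem (H.mul_mem hh hxH) (H.inv_mem hh)) (H.inv_mem hxH)
  set g : K → N' := fun h =>
    ⟨⟨(h : G) * x * (h : G)⁻¹ * x⁻¹, hgmemK h⟩,
      (Subgroup.mem_subgroupOf).mpr (hcomm (h : G) h.2)⟩ with hg_def
  -- g descends to an injection K ⧸ C' → N'
  have hgwd : ∀ a b : K, (QuotientGroup.leftRel C') a b → g a = g b := by
    intro a b hab
    rw [QuotientGroup.leftRel_apply] at hab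
    have hc : ((a⁻¹ * b : K) : G) ∈ Subgroup.centralizer ({x} : Set G) :=
      (Subgroup.mem_subgroupOf).mp hab
    have hcx : x * ((a : G)⁻¹ * (b : G)) = ((a : G)⁻¹ * (b : G)) * x := hc x rfl
    apply Subtype.ext; apply Subtype.ext
    show (a : G) * x * (a : G)⁻¹ * x⁻¹ = (b : G) * x * (b : G)⁻¹ * x⁻¹
    have : (a : G) * (x * ((a : G)⁻¹ * (b : G))) * (b : G)⁻¹ =
        (a : G) * (((a : G)⁻¹ * (b : G)) * x) * (b : G)⁻¹ := by rw [hcx]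
    have key : (a : G) * x * (a : G)⁻¹ = (b : G) * x * (b : G)⁻¹ := by
      calc (a : G) * x * (a : G)⁻¹
          = ((a : G) * (((a : G)⁻¹ * (b : G)) * x) * (b : G)⁻¹) := by rw [← this]; group
        _ = (b : G) * x * (b : G)⁻¹ := by group
    rw [key]
  set β : K ⧸ C' → N' := fun q => Quotient.liftOn' q g hgwd with hβ_def
  have hβinj : Function.Injective β := by
    intro q1 q2
    induction q1 using Quotient.inductionOn'
    induction q2 using Quotient.inductionOn'
    rename_i a b
    intro hab
    have hab' : (a : G) * x * (a : G)⁻¹ * x⁻¹ = (b : G) * x * (b : G)⁻¹ * x⁻¹ := by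
      have := congrArg (fun z : N' => ((z : K) : G)) hab
      exact this
    have hconj : (a : G) * x * (a : G)⁻¹ = (b : G) * x * (b : G)⁻¹ :=
      mul_right_cancel hab'
    have hcmem : ((a⁻¹ * b : K) : G) ∈ Subgroup.centralizer ({x} : Set G) := by
      rw [Subgroup.mem_centralizer_singleton_iff]
      push_cast
      have : x * ((a : G)⁻¹ * (b : G)) = ((a : G)⁻¹ * (b : G)) * x := by
        have h2 : (a : G)⁻¹ * ((a : G) * x * (a : G)⁻¹) * (b : G) =
            (a : G)⁻¹ * ((b : G) * x * (b : G)⁻¹) * (b : G) := by rw [hconj]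
        calc x * ((a : G)⁻¹ * (b : G))
            = (a : G)⁻¹ * ((a : G) * x * (a : G)⁻¹) * (b : G) := by group
          _ = (a : G)⁻¹ * ((b : G) * x * (b : G)⁻¹) * (b : G) := h2
          _ = ((a : G)⁻¹ * (b : G)) * x := by group
      exact this.symm ▸ this
    apply Quotient.sound'
    rw [QuotientGroup.leftRel_apply]
    exact (Subgroup.mem_subgroupOf).mpr hcmem
  have hN'fin : Finite N' := Subtype.finite
  have hC'fin : Finite C' := Subtype.finite
  have hQC'fin : Finite (K ⧸ C') := Quotient.finite _
  have hQN'fin : Finite (K ⧸ N') := Quotient.finite _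
  have hle1 : Nat.card (K ⧸ C') ≤ Nat.card N' := Nat.card_le_card_of_injective β hβinj
  have hlag1 : Nat.card K = Nat.card (K ⧸ N') * Nat.card N' :=
    Subgroup.card_eq_card_quotient_mul_card_subgroup N'
  have hlag2 : Nat.card K = Nat.card (K ⧸ C') * Nat.card C' :=
    Subgroup.card_eq_card_quotient_mul_card_subgroup C'
  have hN'pos : 0 < Nat.card N' := Nat.card_pos
  have hQle : Nat.card (K ⧸ N') ≤ m := by
    have h1 : Nat.card (K ⧸ N') * Nat.card N' ≤ Nat.card C' * Nat.card N' := by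
      rw [← hlag1, hlag2]
      calc Nat.card (K ⧸ C') * Nat.card C' ≤ Nat.card N' * Nat.card C' :=
            Nat.mul_le_mul_right _ hle1
        _ = Nat.card C' * Nat.card N' := Nat.mul_comm _ _
    exact le_trans (Nat.le_of_mul_le_mul_right h1 hN'pos) hC'le
  -- the injection Fin (m+1) → K ⧸ N'
  have hφinj : Function.Injective
      (fun i : Fin (m + 1) => (QuotientGroup.mk (⟨y i, hyK i⟩ : K) : K ⧸ N')) := by
    intro i j hij
    apply hinj
    rw [← hy i, ← hy j]
    rw [QuotientGroup.eq] at hij ⊢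
    exact (Subgroup.mem_subgroupOf).mp hij
  have : m + 1 ≤ Nat.card (K ⧸ N') := by
    have := Nat.card_le_card_of_injective _ hφinj
    simpa using this
  omega

/-- Let `G` be a locally finite group and `x` an element of `G` whose centralizer is finite
of order `m`. Then for every normal subgroup `N` of `G`, the centralizer of the image of
`x` in `G ⧸ N` is finite of order at most `m`. -/
theorem centralizer_quotient_card_le {G : Type*} [Group G]
    (hlf : ∀ S : Set G, S.Finite → (Subgroup.closure S : Set G).Finite)
    (x : G) (m : ℕ)
    (hfin : (Subgroup.centralizer {x} : Set G).Finite)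
    (hcard : Nat.card (Subgroup.centralizer ({x} : Set G)) = m)
    (N : Subgroup G) [N.Normal] :
    (Subgroup.centralizer {(QuotientGroup.mk x : G ⧸ N)} : Set (G ⧸ N)).Finite ∧
      Nat.card (Subgroup.centralizer ({QuotientGroup.mk x} : Set (G ⧸ N))) ≤ m := by
  classical
  have key : ∀ (f : Fin (m + 1) → G ⧸ N),
      (∀ i, f i ∈ Subgroup.centralizer {(QuotientGroup.mk x : G ⧸ N)}) →
      ¬ Function.Injective f := fun f hf hinj =>
    centralizer_quotient_no_inj hlf x m hfin hcard N f hf hinj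
  have hFin : (Subgroup.centralizer {(QuotientGroup.mk x : G ⧸ N)} : Set (G ⧸ N)).Finite := by
    rw [← Set.not_infinite]
    intro hinf
    have : Infinite (Subgroup.centralizer {(QuotientGroup.mk x : G ⧸ N)} :
        Set (G ⧸ N)) := hinf.to_subtype
    set e := Infinite.natEmbedding
      ((Subgroup.centralizer {(QuotientGroup.mk x : G ⧸ N)} : Set (G ⧸ N))) with he
    refine key (fun i => (e i.val : G ⧸ N)) (fun i => (e i.val).2) ?_
    intro i j hij
    have : e i.val = e j.val := Subtype.ext hij
    exact Fin.ext (e.injective this)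
  refine ⟨hFin, ?_⟩
  by_contra hgt
  push_neg at hgt
  have hfinC : Finite (Subgroup.centralizer {(QuotientGroup.mk x : G ⧸ N)} :
      Set (G ⧸ N)) := hFin.to_subtype
  set n := Nat.card (Subgroup.centralizer ({QuotientGroup.mk x} : Set (G ⧸ N))) with hn
  have hmn : m + 1 ≤ n := hgt
  obtain ⟨k, ⟨e⟩⟩ := Finite.exists_equiv_fin
    (Subgroup.centralizer ({QuotientGroup.mk x} : Set (G ⧸ N)))
  have hk : k = n := by
    rw [hn, Nat.card_eq_of_equiv_fin e]
  subst hk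
  refine key (fun i => ((e.symm (Fin.castLE hmn i) : _) : G ⧸ N))
    (fun i => (e.symm (Fin.castLE hmn i)).2) ?_
  intro i j hij
  have h1 : e.symm (Fin.castLE hmn i) = e.symm (Fin.castLE hmn j) := Subtype.ext hij
  have h2 : Fin.castLE hmn i = Fin.castLE hmn j := e.symm.injective h1
  exact Fin.castLE_injective hmn h2
end

section
/- Let d, r, s be positive integers and let G be a soluble group of derived length d generated by a set X such that every element of X has finite order dividing r and has at most s conjugates in G. Then G has finite exponent bounded above by a number depending only on d, r and s. -/
universe u

open Subgroup
open scoped commutatorElement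

variable {G : Type*} [Group G] [DecidableEq G]

/-- Pull one occurrence of `a` to the front of a product over a conjugation-closed set. -/
lemma pull_front {S : Set G} (hS : ∀ (g : G), ∀ u ∈ S, g * u * g⁻¹ ∈ S) (a : G) :
    ∀ l : List G, (∀ b ∈ l, b ∈ S) → a ∈ l →
      ∃ t : List G, (∀ b ∈ t, b ∈ S) ∧ a * t.prod = l.prod ∧ t.length + 1 = l.length ∧
        t.count a + 1 = l.count a := by
  intro l
  induction l with
  | nil => intro _ h; simp at h
  | cons b l ih =>
    intro hmem hal
    by_cases hab : a = b
    · subst hab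
      exact ⟨l, fun c hc => hmem c (List.mem_cons_of_mem _ hc), by simp, by simp,
        by simp [List.count_cons]⟩
    · have hal' : a ∈ l := by
        rcases List.mem_cons.mp hal with h | h
        · exact absurd h hab
        · exact h
      obtain ⟨t, htS, htp, htl, htc⟩ := ih (fun c hc => hmem c (List.mem_cons_of_mem _ hc)) hal'
      refine ⟨(a⁻¹ * b * a) :: t, ?_, ?_, ?_, ?_⟩
      · intro c hc
        rcases List.mem_cons.mp hc with h | h
        · subst h
          have := hS a⁻¹ b (hmem b (List.mem_cons_self))
          simpa using this
        · exact htS c h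
      · simp only [List.prod_cons]
        calc a * ((a⁻¹ * b * a) * t.prod) = b * (a * t.prod) := by group
        _ = b * l.prod := by rw [htp]
      · simp [← htl]
      · have hne : a⁻¹ * b * a ≠ a := by
          intro h
          apply hab
          have h2 : a * (a⁻¹ * b * a) * a⁻¹ = a * a * a⁻¹ := by rw [h]
          have h3 : a * (a⁻¹ * b * a) * a⁻¹ = b := by group
          have h4 : a * a * a⁻¹ = a := by group
          rw [h3, h4] at h2
          exact h2.symm
        simp [List.count_cons, hne, Ne.symm hab, ← htc]

lemma pull_pow {S : Set G} (hS : ∀ (g : G), ∀ u ∈ S, g * u * g⁻¹ ∈ S) (a : G) :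
    ∀ (n : ℕ) (l : List G), (∀ b ∈ l, b ∈ S) → n ≤ l.count a →
      ∃ t : List G, (∀ b ∈ t, b ∈ S) ∧ a ^ n * t.prod = l.prod ∧ t.length + n = l.length := by
  intro n
  induction n with
  | zero => intro l hl _; exact ⟨l, hl, by simp, by simp⟩
  | succ n ih =>
    intro l hl hcount
    have hmem : a ∈ l := by
      rw [← List.count_pos_iff]
      omega
    obtain ⟨t1, ht1S, ht1p, ht1l, ht1c⟩ := pull_front hS a l hl hmem
    obtain ⟨t, htS, htp, htl⟩ := ih t1 ht1S (by omega)
    refine ⟨t, htS, ?_, by omega⟩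
    rw [pow_succ', mul_assoc, htp, ht1p]

lemma reduce_list {S : Set G} {r s : ℕ} (hr : 0 < r)
    (hS : ∀ (g : G), ∀ u ∈ S, g * u * g⁻¹ ∈ S) (hord : ∀ u ∈ S, u ^ r = 1)
    (hfin : S.Finite) (hcard : S.ncard ≤ s) :
    ∀ (n : ℕ) (l : List G), l.length ≤ n → (∀ b ∈ l, b ∈ S) →
      ∃ t : List G, (∀ b ∈ t, b ∈ S) ∧ t.prod = l.prod ∧ t.length ≤ s * (r - 1) := by
  intro n
  induction n with
  | zero => intro l hlen hl; exact ⟨l, hl, rfl, by omega⟩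
  | succ n ih =>
    intro l hlen hl
    by_cases hshort : l.length ≤ s * (r - 1)
    · exact ⟨l, hl, rfl, hshort⟩
    have hcardfin : l.toFinset.card ≤ s := by
      have hsub : ↑l.toFinset ⊆ S := by
        intro c hc
        simp only [Finset.coe_sort_coe, List.coe_toFinset, Set.mem_setOf_eq] at hc
        exact hl c hc
      calc l.toFinset.card = (↑l.toFinset : Set G).ncard := (Set.ncard_coe_finset _).symm
      _ ≤ S.ncard := Set.ncard_le_ncard hsub hfin
      _ ≤ s := hcard
    have hpigeon : ∃ a ∈ l, r ≤ l.count a := by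
      by_contra hcon
      push_neg at hcon
      have hsum : ∑ a ∈ l.toFinset, l.count a = l.length := by
        simpa using Multiset.toFinset_sum_count_eq (l : Multiset G)
      have hle : l.length ≤ l.toFinset.card * (r - 1) := by
        rw [← hsum]
        calc ∑ a ∈ l.toFinset, l.count a ≤ ∑ _a ∈ l.toFinset, (r - 1) := by
              refine Finset.sum_le_sum ?_
              intro a ha
              have := hcon a (List.mem_toFinset.mp ha)
              omega
        _ = l.toFinset.card * (r - 1) := by simp [Finset.sum_const, mul_comm]
      have : l.toFinset.card * (r - 1) ≤ s * (r - 1) := Nat.mul_le_mul_right _ hcardfin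
      omega
    obtain ⟨a, hal, hcount⟩ := hpigeon
    obtain ⟨t1, ht1S, ht1p, ht1l⟩ := pull_pow hS a r l hl hcount
    have har : a ^ r = 1 := hord a (hl a hal)
    have ht1p' : t1.prod = l.prod := by rw [← ht1p, har, one_mul]
    have : t1.length ≤ n := by omega
    obtain ⟨t, htS, htp, htl⟩ := ih t1 this ht1S
    exact ⟨t, htS, htp.trans ht1p', htl⟩

/-- In a group, if every element of `S` satisfies `u ^ r = 1` with `r > 0`, then every element
of the subgroup closure of `S` is a product of a list of elements of `S`. -/
lemma mem_closure_exists_list {S : Set G} {r : ℕ} (hr : 0 < r) (hord : ∀ u ∈ S, u ^ r = 1)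
    {g : G} (hg : g ∈ Subgroup.closure S) :
    ∃ l : List G, (∀ b ∈ l, b ∈ S) ∧ l.prod = g := by
  have hM : g ∈ Submonoid.closure S := by
    have hinv : ∀ h : G, h ∈ Submonoid.closure S → h⁻¹ ∈ Submonoid.closure S := by
      intro h hh
      induction hh using Submonoid.closure_induction with
      | mem u hu =>
        have h2 : u * u ^ (r-1) = 1 := by
          rw [← pow_succ', Nat.sub_add_cancel hr]
          exact hord u hu
        rw [inv_eq_of_mul_eq_one_right h2]
        exact pow_mem (Submonoid.subset_closure hu) _
      | one => simpa using Submonoid.one_mem _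
      | mul x y hx hy ihx ihy =>
        rw [mul_inv_rev]
        exact mul_mem ihy ihx
    induction hg using Subgroup.closure_induction with
    | mem u hu => exact Submonoid.subset_closure hu
    | one => exact Submonoid.one_mem _
    | mul x y hx hy ihx ihy => exact mul_mem ihx ihy
    | inv x hx ihx => exact hinv x ihx
  exact Submonoid.exists_list_of_mem_closure hM

/-- Bound on the cardinality of an `image2`. -/
lemma ncard_image2_le {α β γ : Type*} (f : α → β → γ) {A : Set α} {B : Set β}
    (hA : A.Finite) (hB : B.Finite) :
    (Set.image2 f A B).ncard ≤ A.ncard * B.ncard := by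
  classical
  have h1 : Set.image2 f A B = ↑(Finset.image₂ f hA.toFinset hB.toFinset) := by
    simp [Finset.coe_image₂]
  rw [h1, Set.ncard_coe_finset]
  calc (Finset.image₂ f hA.toFinset hB.toFinset).card ≤ hA.toFinset.card * hB.toFinset.card :=
        Finset.card_image₂_le _ _ _
  _ = A.ncard * B.ncard := by rw [Set.ncard_eq_toFinset_card A hA, Set.ncard_eq_toFinset_card B hB]

/-- The set of products of lists over `S` of length at most `n` is finite of
cardinality at most `(s+1)^n`. -/
lemma prodSet_finite_card {S : Set G} {s : ℕ} (hfin : S.Finite) (hcard : S.ncard ≤ s) (n : ℕ) :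
    ({g : G | ∃ l : List G, (∀ b ∈ l, b ∈ S) ∧ l.length ≤ n ∧ l.prod = g}).Finite ∧
    ({g : G | ∃ l : List G, (∀ b ∈ l, b ∈ S) ∧ l.length ≤ n ∧ l.prod = g}).ncard ≤ (s+1)^n := by
  induction n with
  | zero =>
    have h1 : {g : G | ∃ l : List G, (∀ b ∈ l, b ∈ S) ∧ l.length ≤ 0 ∧ l.prod = g} = {1} := by
      ext g
      simp only [Set.mem_setOf_eq, Set.mem_singleton_iff]
      constructor
      · rintro ⟨l, _, hlen, rfl⟩
        have hnil : l = [] := List.length_eq_zero_iff.mp (by omega)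
        subst hnil
        simp
      · rintro rfl
        exact ⟨[], by simp, by simp, by simp⟩
    rw [h1]
    exact ⟨Set.finite_singleton _, by simp⟩
  | succ n ih =>
    obtain ⟨ihfin, ihcard⟩ := ih
    have hsub : {g : G | ∃ l : List G, (∀ b ∈ l, b ∈ S) ∧ l.length ≤ n + 1 ∧ l.prod = g} ⊆
        {g : G | ∃ l : List G, (∀ b ∈ l, b ∈ S) ∧ l.length ≤ n ∧ l.prod = g} ∪
        Set.image2 (· * ·) S {g : G | ∃ l : List G, (∀ b ∈ l, b ∈ S) ∧ l.length ≤ n ∧ l.prod = g} := by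
      rintro g ⟨l, hlS, hlen, rfl⟩
      match l with
      | [] => exact Or.inl ⟨[], by simp, by simp, by simp⟩
      | a :: t =>
        right
        refine ⟨a, hlS a (List.mem_cons_self), t.prod,
          ⟨t, fun b hb => hlS b (List.mem_cons_of_mem _ hb), by simp at hlen; omega, rfl⟩, ?_⟩
        simp
    have hfin2 : ({g : G | ∃ l : List G, (∀ b ∈ l, b ∈ S) ∧ l.length ≤ n ∧ l.prod = g} ∪
        Set.image2 (· * ·) S {g : G | ∃ l : List G, (∀ b ∈ l, b ∈ S) ∧ l.length ≤ n ∧ l.prod = g}).Finite :=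
      Set.Finite.union ihfin (Set.Finite.image2 _ hfin ihfin)
    constructor
    · exact Set.Finite.subset hfin2 hsub
    · calc {g : G | ∃ l : List G, (∀ b ∈ l, b ∈ S) ∧ l.length ≤ n + 1 ∧ l.prod = g}.ncard
          ≤ ({g : G | ∃ l : List G, (∀ b ∈ l, b ∈ S) ∧ l.length ≤ n ∧ l.prod = g} ∪
            Set.image2 (· * ·) S {g : G | ∃ l : List G, (∀ b ∈ l, b ∈ S) ∧ l.length ≤ n ∧ l.prod = g}).ncard :=
            Set.ncard_le_ncard hsub hfin2
      _ ≤ {g : G | ∃ l : List G, (∀ b ∈ l, b ∈ S) ∧ l.length ≤ n ∧ l.prod = g}.ncard +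
            (Set.image2 (· * ·) S {g : G | ∃ l : List G, (∀ b ∈ l, b ∈ S) ∧ l.length ≤ n ∧ l.prod = g}).ncard :=
            Set.ncard_union_le _ _
      _ ≤ (s+1)^n + s * (s+1)^n := by
            have h1 := ncard_image2_le (· * ·) hfin ihfin
            have h2 : S.ncard * {g : G | ∃ l : List G, (∀ b ∈ l, b ∈ S) ∧ l.length ≤ n ∧ l.prod = g}.ncard
                ≤ s * (s+1)^n := Nat.mul_le_mul hcard ihcard
            omega
      _ = (s+1)^(n+1) := by ring

omit [DecidableEq G] in
/-- Quantitative Dietzmann: every element of the subgroup generated by the conjugacy class of `x`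
(finite with at most `s` elements, `x^r = 1`) has order killed by `M!` where
`M = (s+1)^(s*(r-1))`. -/
lemma closure_conjClass_pow_eq_one {x : G} {r s : ℕ} (hr : 0 < r) (hxr : x ^ r = 1)
    (hfin : {z : G | IsConj x z}.Finite) (hcard : {z : G | IsConj x z}.ncard ≤ s) :
    ∀ g ∈ Subgroup.closure {z : G | IsConj x z},
      g ^ (Nat.factorial ((s+1)^(s*(r-1)))) = 1 := by
  classical
  set S : Set G := {z : G | IsConj x z} with hSdef
  have hS : ∀ (g : G), ∀ u ∈ S, g * u * g⁻¹ ∈ S := by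
    intro g u hu
    exact hu.trans (isConj_iff.2 ⟨g, rfl⟩)
  have hord : ∀ u ∈ S, u ^ r = 1 := by
    intro u hu
    obtain ⟨c, rfl⟩ := isConj_iff.1 hu
    have h1 : (MulAut.conj c x) ^ r = MulAut.conj c (x ^ r) := (map_pow _ _ _).symm
    simpa [MulAut.conj_apply, hxr] using h1
  set M : ℕ := (s+1)^(s*(r-1)) with hMdef
  set P : Set G := {g : G | ∃ l : List G, (∀ b ∈ l, b ∈ S) ∧ l.length ≤ s * (r-1) ∧ l.prod = g}
    with hPdef
  obtain ⟨hPfin, hPcard⟩ := prodSet_finite_card hfin hcard (s * (r-1))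
  set N : Subgroup G := Subgroup.closure S with hNdef
  have hNP : (N : Set G) ⊆ P := by
    intro g hg
    obtain ⟨l, hlS, hlp⟩ := mem_closure_exists_list hr hord hg
    obtain ⟨t, htS, htp, htl⟩ := reduce_list hr hS hord hfin hcard l.length l le_rfl hlS
    exact ⟨t, htS, htl, htp.trans hlp⟩
  have hNfin : (N : Set G).Finite := hPfin.subset hNP
  haveI : Finite ↥N := hNfin.to_subtype
  have hcardN : Nat.card ↥N ≤ M := by
    calc Nat.card ↥N = (N : Set G).ncard := Nat.card_coe_set_eq _
    _ ≤ P.ncard := Set.ncard_le_ncard hNP hPfin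
    _ ≤ M := hPcard
  have hposN : 0 < Nat.card ↥N := Nat.card_pos
  intro g hg
  have hpow : g ^ (Nat.card ↥N) = 1 := by
    have h1 : (⟨g, hg⟩ : ↥N) ^ (Nat.card ↥N) = 1 := pow_card_eq_one'
    have h2 := congrArg Subtype.val h1
    rw [SubmonoidClass.coe_pow] at h2
    exact h2
  have hdvd : Nat.card ↥N ∣ M.factorial := Nat.dvd_factorial hposN hcardN
  obtain ⟨k, hk⟩ := hdvd
  rw [hk, pow_mul, hpow, one_pow]

omit [DecidableEq G] in
/-- If a group is generated by pairwise commuting elements then it is commutative. -/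
lemma commute_all_of_closure_eq_top {S : Set G} (hgen : Subgroup.closure S = ⊤)
    (hc : ∀ a ∈ S, ∀ b ∈ S, Commute a b) : ∀ g h : G, Commute g h := by
  have step1 : ∀ a ∈ S, ∀ q : G, Commute a q := by
    intro a ha q
    have hsub : S ⊆ (Subgroup.centralizer {a} : Set G) := by
      intro b hb
      rw [SetLike.mem_coe, Subgroup.mem_centralizer_singleton_iff]
      exact (hc a ha b hb).symm.eq
    have h2 : (⊤ : Subgroup G) ≤ Subgroup.centralizer {a} := by
      rw [← hgen]
      exact (Subgroup.closure_le _).mpr hsub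
    have h3 := h2 (Subgroup.mem_top q)
    rw [Subgroup.mem_centralizer_singleton_iff] at h3
    exact (Commute.symm h3 : _)
  intro g h
  have hsub : S ⊆ (Subgroup.centralizer {h} : Set G) := by
    intro b hb
    rw [SetLike.mem_coe, Subgroup.mem_centralizer_singleton_iff]
    exact (step1 b hb h).eq
  have h2 : (⊤ : Subgroup G) ≤ Subgroup.centralizer {h} := by
    rw [← hgen]
    exact (Subgroup.closure_le _).mpr hsub
  have h3 := h2 (Subgroup.mem_top g)
  rw [Subgroup.mem_centralizer_singleton_iff] at h3
  exact (h3 : Commute g h)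

omit [DecidableEq G] in
lemma conj_commutatorElement (g a b : G) :
    g * ⁅a, b⁆ * g⁻¹ = ⁅g * a * g⁻¹, g * b * g⁻¹⁆ := by
  simp only [commutatorElement_def]
  group

omit [DecidableEq G] in
/-- The derived series of the commutator subgroup sits inside the (shifted) derived series. -/
lemma map_derivedSeries_commutator_le (K : Subgroup G) (hK : K = commutator G) (n : ℕ) :
    (derivedSeries ↥K n).map K.subtype ≤ derivedSeries G (n + 1) := by
  induction n with
  | zero =>
    rw [derivedSeries_zero]
    have h1 : (⊤ : Subgroup ↥K).map K.subtype = K := by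
      rw [← MonoidHom.range_eq_map, Subgroup.range_subtype]
    rw [h1, hK, ← derivedSeries_one]
  | succ n ih =>
    rw [derivedSeries_succ, derivedSeries_succ, Subgroup.map_commutator]
    exact Subgroup.commutator_mono ih ih

theorem aux_soluble (d : ℕ) : ∀ r s : ℕ, 0 < r → 0 < s →
    ∃ B : ℕ, 0 < B ∧ ∀ (G : Type u) [Group G] (X : Set G),
      derivedSeries G d = ⊥ → Subgroup.closure X = ⊤ → (∀ x ∈ X, x ^ r = 1) →
      (∀ x ∈ X, {y : G | IsConj x y}.Finite ∧ {y : G | IsConj x y}.ncard ≤ s) →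
      ∀ g : G, g ^ B = 1 := by
  induction d with
  | zero =>
    intro r s _ _
    refine ⟨1, one_pos, ?_⟩
    intro G _ X hder _ _ _ g
    rw [derivedSeries_zero] at hder
    have hg : g ∈ (⊥ : Subgroup G) := hder ▸ Subgroup.mem_top g
    rw [Subgroup.mem_bot] at hg
    rw [hg, one_pow]
  | succ d ih =>
    intro r s hr hs
    obtain ⟨B', hB'pos, hB'⟩ := ih (Nat.factorial ((s+1)^(s*(r-1)))) (s*s)
      (Nat.factorial_pos _) (Nat.mul_pos hs hs)
    refine ⟨r * B', Nat.mul_pos hr hB'pos, ?_⟩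
    intro G _ X hder hgen hord hconj g
    classical
    set C0 : Set G := {c | ∃ x ∈ X, ∃ y ∈ X, ⁅x, y⁆ = c} with hC0
    set K : Subgroup G := Subgroup.normalClosure C0 with hKdef
    -- the quotient is generated by commuting images of X
    have hQgen : Subgroup.closure ((QuotientGroup.mk' K) '' X) = ⊤ := by
      rw [← MonoidHom.map_closure, hgen]
      exact Subgroup.map_top_of_surjective _ (QuotientGroup.mk'_surjective K)
    have hQcommgen : ∀ a ∈ (QuotientGroup.mk' K) '' X, ∀ b ∈ (QuotientGroup.mk' K) '' X,
        Commute a b := by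
      rintro a ⟨x, hx, rfl⟩ b ⟨y, hy, rfl⟩
      rw [← commutatorElement_eq_one_iff_commute, ← map_commutatorElement]
      rw [← MonoidHom.mem_ker, QuotientGroup.ker_mk']
      exact Subgroup.subset_normalClosure ⟨x, hx, y, hy, rfl⟩
    have hQcomm : ∀ a b : G ⧸ K, Commute a b :=
      commute_all_of_closure_eq_top hQgen hQcommgen
    -- K is the commutator subgroup
    have hKcomm : K = commutator G := by
      apply le_antisymm
      · apply Subgroup.normalClosure_le_normal
        rintro c ⟨x, _, y, _, rfl⟩
        rw [_root_.commutator_def]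
        exact Subgroup.commutator_mem_commutator (Subgroup.mem_top x) (Subgroup.mem_top y)
      · rw [_root_.commutator_def]
        rw [Subgroup.commutator_le]
        intro g1 _ g2 _
        have h1 : (QuotientGroup.mk' K) ⁅g1, g2⁆ = 1 := by
          rw [map_commutatorElement]
          exact commutatorElement_eq_one_iff_commute.mpr (hQcomm _ _)
        rwa [← MonoidHom.mem_ker, QuotientGroup.ker_mk'] at h1
    -- K has derived length d
    have hKder : derivedSeries ↥K d = ⊥ := by
      have h := map_derivedSeries_commutator_le K hKcomm d
      rw [hder] at h
      have h2 : derivedSeries ↥K d ≤ K.subtype.ker :=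
        (Subgroup.map_eq_bot_iff _).mp (le_bot_iff.mp h)
      rw [Subgroup.ker_subtype] at h2
      exact le_bot_iff.mp h2
    -- generating set for K
    set Y : Set ↥K := {c : ↥K | ∃ x ∈ X, ∃ y ∈ X, ∃ w : G, w * ⁅x, y⁆ * w⁻¹ = ↑c} with hY
    have hYgen : Subgroup.closure Y = ⊤ := by
      rw [eq_top_iff]
      rintro ⟨k, hk⟩ -
      have hk' : k ∈ Subgroup.closure (Group.conjugatesOfSet C0) := hk
      refine Subgroup.closure_induction
        (p := fun g _ => ∀ (h : g ∈ K), (⟨g, h⟩ : ↥K) ∈ Subgroup.closure Y)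
        ?_ ?_ ?_ ?_ hk' hk
      · intro z hz hzK
        apply Subgroup.subset_closure
        obtain ⟨c0, hc0, hconjz⟩ := Group.mem_conjugatesOfSet_iff.mp hz
        obtain ⟨x, hx, y, hy, rfl⟩ := hc0
        obtain ⟨w, hw⟩ := isConj_iff.1 hconjz
        exact ⟨x, hx, y, hy, w, hw⟩
      · intro h
        exact Subgroup.one_mem _
      · intro a b ha hb iha ihb hmem
        exact Subgroup.mul_mem _ (iha ha) (ihb hb)
      · intro a ha iha hmem
        exact Subgroup.inv_mem _ (iha ha)
    -- elements of Y have bounded order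
    have hYord : ∀ c ∈ Y, c ^ (Nat.factorial ((s+1)^(s*(r-1)))) = 1 := by
      rintro c ⟨x, hx, y, hy, w, hw⟩
      obtain ⟨hfinx, hcardx⟩ := hconj x hx
      -- the normal closure of x
      have hset : Group.conjugatesOfSet ({x} : Set G) = {z : G | IsConj x z} := by
        ext z
        rw [Group.mem_conjugatesOfSet_iff]
        simp
      have hNeq : Subgroup.normalClosure ({x} : Set G)
          = Subgroup.closure {z : G | IsConj x z} := by
        rw [Subgroup.normalClosure, hset]
      set u : G := w * x * w⁻¹ with hu
      set v : G := w * y * w⁻¹ with hv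
      have hcu : (c : G) = ⁅u, v⁆ := by rw [← hw, conj_commutatorElement]
      have hcuv : (c : G) = u * (v * u⁻¹ * v⁻¹) := by rw [hcu]; group
      have humem : u ∈ Subgroup.normalClosure ({x} : Set G) :=
        Subgroup.Normal.conj_mem (Subgroup.normalClosure_normal) x
          (Subgroup.subset_normalClosure (s := {x}) rfl) w
      have hvmem : v * u⁻¹ * v⁻¹ ∈ Subgroup.normalClosure ({x} : Set G) :=
        Subgroup.Normal.conj_mem (Subgroup.normalClosure_normal) u⁻¹
          (Subgroup.inv_mem _ humem) v
      have hcmem : (c : G) ∈ Subgroup.closure {z : G | IsConj x z} := by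
        rw [← hNeq, hcuv]
        exact Subgroup.mul_mem _ humem hvmem
      have hpow := closure_conjClass_pow_eq_one hr (hord x hx) hfinx hcardx (c : G) hcmem
      apply Subtype.ext
      rw [SubmonoidClass.coe_pow]
      simpa using hpow
    -- elements of Y have at most s*s conjugates
    have hYconj : ∀ c ∈ Y, {k : ↥K | IsConj c k}.Finite ∧ {k : ↥K | IsConj c k}.ncard ≤ s*s := by
      rintro c ⟨x, hx, y, hy, w, hw⟩
      obtain ⟨hfinx, hcardx⟩ := hconj x hx
      obtain ⟨hfiny, hcardy⟩ := hconj y hy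
      set T : Set G := Set.image2 (fun a b => ⁅a, b⁆) {z : G | IsConj x z} {z : G | IsConj y z}
        with hT
      have hTfin : T.Finite := Set.Finite.image2 _ hfinx hfiny
      have hTcard : T.ncard ≤ s * s :=
        le_trans (ncard_image2_le _ hfinx hfiny) (Nat.mul_le_mul hcardx hcardy)
      have himg : Subtype.val '' {k : ↥K | IsConj c k} ⊆ T := by
        rintro z ⟨k, hkA, rfl⟩
        obtain ⟨q, hq⟩ := isConj_iff.1 hkA
        have hkval : (k : G) = (↑q * w) * ⁅x, y⁆ * (↑q * w)⁻¹ := by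
          have h1 : (k : G) = ↑q * ↑c * (↑q)⁻¹ := by
            rw [← hq]
            simp [Subgroup.coe_mul]
          rw [h1, ← hw]
          group
        rw [hkval, conj_commutatorElement]
        exact ⟨(↑q * w) * x * (↑q * w)⁻¹, isConj_iff.2 ⟨↑q * w, rfl⟩,
          (↑q * w) * y * (↑q * w)⁻¹, isConj_iff.2 ⟨↑q * w, rfl⟩, rfl⟩
      have hAfin : {k : ↥K | IsConj c k}.Finite :=
        Set.Finite.of_finite_image (hTfin.subset himg) (Set.injOn_of_injective Subtype.val_injective)
      refine ⟨hAfin, ?_⟩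
      calc {k : ↥K | IsConj c k}.ncard
          = (Subtype.val '' {k : ↥K | IsConj c k}).ncard :=
            (Set.ncard_image_of_injective _ Subtype.val_injective).symm
      _ ≤ T.ncard := Set.ncard_le_ncard himg hTfin
      _ ≤ s * s := hTcard
    -- apply the induction hypothesis to K
    have hKexp : ∀ k : ↥K, k ^ B' = 1 := hB' ↥K Y hKder hYgen hYord hYconj
    -- g^r lies in K
    have hgr : g ^ r ∈ K := by
      set W : Subgroup (G ⧸ K) :=
        { carrier := {q | q ^ r = 1}
          one_mem' := one_pow r
          mul_mem' := by
            intro a b ha hb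
            simp only [Set.mem_setOf_eq] at ha hb ⊢
            rw [Commute.mul_pow (hQcomm a b), ha, hb, one_mul]
          inv_mem' := by
            intro a ha
            simp only [Set.mem_setOf_eq] at ha ⊢
            rw [inv_pow, ha, inv_one] } with hW
      have himgW : (QuotientGroup.mk' K) '' X ⊆ W := by
        rintro q ⟨x, hx, rfl⟩
        show ((QuotientGroup.mk' K) x) ^ r = 1
        rw [← map_pow, hord x hx, map_one]
      have hWtop : (⊤ : Subgroup (G ⧸ K)) ≤ W := by
        rw [← hQgen]
        exact (Subgroup.closure_le _).mpr himgW
      have h1 : ((QuotientGroup.mk' K) g) ^ r = 1 := hWtop (Subgroup.mem_top _)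
      rw [← map_pow, ← MonoidHom.mem_ker, QuotientGroup.ker_mk'] at h1
      exact h1
    -- conclude
    have h2 : ((⟨g ^ r, hgr⟩ : ↥K)) ^ B' = 1 := hKexp _
    have h3 := congrArg Subtype.val h2
    rw [SubmonoidClass.coe_pow] at h3
    rw [pow_mul]
    simpa using h3

/-- Let `d, r, s` be positive integers. There is a bound `B`, depending only on `d`, `r`
and `s`, such that every soluble group of derived length (at most) `d` generated by a set
`X` of elements of finite order dividing `r`, each having at most `s` conjugates, has
finite exponent at most `B`. -/
theorem soluble_bounded_exponent (d r s : ℕ) (hd : 0 < d) (hr : 0 < r) (hs : 0 < s) :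
    ∃ B : ℕ, ∀ (G : Type u) [Group G] (X : Set G),
      derivedSeries G d = ⊥ →
      Subgroup.closure X = ⊤ →
      (∀ x ∈ X, x ^ r = 1) →
      (∀ x ∈ X, {y : G | IsConj x y}.Finite ∧ {y : G | IsConj x y}.ncard ≤ s) →
      0 < Monoid.exponent G ∧ Monoid.exponent G ≤ B := by
  obtain ⟨B, hBpos, hB⟩ := aux_soluble.{u} d r s hr hs
  refine ⟨B, ?_⟩
  intro G _ X hder hgen hord hconj
  have hall : ∀ g : G, g ^ B = 1 := hB G X hder hgen hord hconj
  have hdvd : Monoid.exponent G ∣ B := Monoid.exponent_dvd_of_forall_pow_eq_one hall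
  exact ⟨Nat.pos_of_dvd_of_pos hdvd hBpos, Nat.le_of_dvd hBpos hdvd⟩
end
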